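/- arXiv:1709.03430 — 6 statements merged into one kernel-verified Lean document; each statement's English description precedes it below -/
import Mathlib

section
/- There exists a unique family (a_n)_{n≥0} of elements of the polynomial ring ℚ[g₂,g₃] such that the formal Laurent series ℘ := p⁻² + Σ_{n≥0} a_n pⁿ in ℚ[g₂,g₃]((p)) satisfies (℘′)² = 4℘³ − g₂·℘ − g₃, where ℘′ denotes the derivative of ℘ with respect to p. -/
/-!
STATEMENT 0: There exists a unique family `(aₙ)` of elements of `ℚ[g₂,g₃]` such that
`℘ := p⁻² + Σ_{n≥0} aₙ pⁿ ∈ ℚ[g₂,g₃]((p))` satisfies `(℘′)² = 4℘³ − g₂℘ − g₃`.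
-/

noncomputable section

/-- The polynomial ring `ℚ[g₂, g₃]`, with `g₂ = X 0` and `g₃ = X 1`. -/
abbrev RQ : Type := MvPolynomial (Fin 2) ℚ

/-- The variable `g₂`. -/
def gTwo : RQ := MvPolynomial.X 0

/-- The variable `g₃`. -/
def gThree : RQ := MvPolynomial.X 1

/-- The derivation `d/dp` on the ring of formal Laurent series `ℚ[g₂,g₃]((p))`. -/
def lsDeriv (f : LaurentSeries RQ) : LaurentSeries RQ where
  coeff n := (n + 1 : ℤ) • f.coeff (n + 1)
  isPWO_support' := by
    have h : Function.support (fun n : ℤ => (n + 1 : ℤ) • f.coeff (n + 1)) ⊆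
        (fun n : ℤ => n - 1) '' f.support := by
      intro n hn
      refine ⟨n + 1, ?_, by ring⟩
      intro h0
      apply hn
      simp only [Function.mem_support, not_not] at *
      rw [h0, smul_zero]
    exact (f.isPWO_support.image_of_monotone
      (fun a b hab => sub_le_sub_right hab 1)).mono h

/-- The formal Laurent series `℘ := p⁻² + Σ_{n≥0} aₙ pⁿ` attached to
a family `(aₙ)` of elements of `ℚ[g₂,g₃]`. -/
def wp (a : ℕ → RQ) : LaurentSeries RQ :=
  HahnSeries.single (-2 : ℤ) (1 : RQ) +
    HahnSeries.ofPowerSeries ℤ RQ (PowerSeries.mk a)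

open PowerSeries

abbrev P : Type := PowerSeries RQ

/-- derivative shorthand -/
abbrev D (f : P) : P := PowerSeries.derivative RQ f

lemma D_sub (f g : P) : D (f - g) = D f - D g := by
  ext n
  simp [PowerSeries.coeff_derivative, sub_mul]

lemma dvd_X_mul_D {n : ℕ} {f : P} (h : (X:P)^n ∣ f) : (X:P)^n ∣ X * D f := by
  rw [PowerSeries.X_pow_dvd_iff] at h ⊢
  intro m hm
  cases m with
  | zero => simp
  | succ k =>
      rw [PowerSeries.coeff_succ_X_mul, PowerSeries.coeff_derivative, h (k+1) hm, zero_mul]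

lemma coeff_X_mul_D (f : P) (n : ℕ) :
    PowerSeries.coeff n ((X:P) * D f) = (n : RQ) * PowerSeries.coeff n f := by
  cases n with
  | zero => simp
  | succ k =>
      rw [PowerSeries.coeff_succ_X_mul, PowerSeries.coeff_derivative]
      push_cast
      ring

/-- `p³℘′` as a power series. -/
def Wps (v : P) : P := -2 + (X:P)^3 * D v

/-- `p⁶(4℘³ - g₂℘ - g₃)` as a power series. -/
def Ups (v : P) : P :=
  4 * (1 + (X:P)^2 * v)^3 - PowerSeries.C gTwo * (X:P)^4 * (1 + (X:P)^2 * v)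
    - PowerSeries.C gThree * (X:P)^6

def Eps (v : P) : P := Wps v ^ 2 - Ups v

def Nps (v : P) : P :=
  (X:P)^6 * (D v)^2 - 12 * (X:P)^4 * v^2 - 4 * (X:P)^6 * v^3
    + PowerSeries.C gTwo * (X:P)^4 + PowerSeries.C gTwo * (X:P)^6 * v
    + PowerSeries.C gThree * (X:P)^6

lemma Eps_eq (v : P) :
    Eps v = Nps v - 12 * ((X:P)^2 * v) - 4 * ((X:P)^2 * ((X:P) * D v)) := by
  unfold Eps Wps Ups Nps
  ring

lemma X_sq_dvd_Eps (v : P) :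
    Eps v = (X:P)^2 * ((X:P)^4*(D v)^2 - 12*(X:P)^2*v^2 - 4*(X:P)^4*v^3
      + PowerSeries.C gTwo * (X:P)^2 + PowerSeries.C gTwo * (X:P)^4 * v
      + PowerSeries.C gThree * (X:P)^4 - 12*v - 4*((X:P) * D v)) := by
  unfold Eps Wps Ups
  ring

lemma Nps_dvd {n : ℕ} {v w : P} (h : (X:P)^n ∣ v - w) :
    (X:P)^(n+3) ∣ Nps v - Nps w := by
  have hD : (X:P)^n ∣ (X:P) * D v - (X:P) * D w := by
    have := dvd_X_mul_D h
    rwa [D_sub, mul_sub] at this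
  have hpow : (X:P)^(n+3) = (X:P)^3 * (X:P)^n := by rw [← pow_add]; ring_nf
  have key : Nps v - Nps w =
      (X:P)^5 * ((X:P) * D v - (X:P) * D w) * (D v + D w)
      - ((X:P)^3 * (v - w)) * (12 * (X:P) * (v + w))
      - ((X:P)^3 * (v - w)) * (4 * (X:P)^3 * (v^2 + v*w + w^2))
      + ((X:P)^3 * (v - w)) * (PowerSeries.C gTwo * (X:P)^3) := by
    unfold Nps; ring
  rw [key, hpow]
  have h1 : (X:P)^3 * (X:P)^n ∣ (X:P)^5 * ((X:P) * D v - (X:P) * D w) * (D v + D w) :=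
    Dvd.dvd.mul_right (mul_dvd_mul (pow_dvd_pow _ (by norm_num)) hD) _
  have h2 : (X:P)^3 * (X:P)^n ∣ (X:P)^3 * (v - w) := mul_dvd_mul_left _ h
  exact dvd_add (dvd_sub (dvd_sub h1 (h2.mul_right _)) (h2.mul_right _)) (h2.mul_right _)

lemma Nps_coeff_congr {n : ℕ} {v w : P} (h : (X:P)^n ∣ v - w) :
    PowerSeries.coeff (n+2) (Nps v) = PowerSeries.coeff (n+2) (Nps w) := by
  have := (PowerSeries.X_pow_dvd_iff.mp (Nps_dvd h)) (n+2) (by omega)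
  rw [map_sub, sub_eq_zero] at this
  exact this

lemma coeff_Eps (v : P) (n : ℕ) :
    PowerSeries.coeff (n+2) (Eps v) =
      PowerSeries.coeff (n+2) (Nps v) - ((12 + 4*n : ℕ) : RQ) * PowerSeries.coeff n v := by
  rw [Eps_eq, map_sub, map_sub]
  rw [(map_ofNat (PowerSeries.C (R := RQ)) 12).symm, (map_ofNat (PowerSeries.C (R := RQ)) 4).symm]
  rw [PowerSeries.coeff_C_mul, PowerSeries.coeff_C_mul,
    PowerSeries.coeff_X_pow_mul, PowerSeries.coeff_X_pow_mul, coeff_X_mul_D]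
  push_cast
  ring

lemma agree_dvd {n : ℕ} {v w : P} (h : ∀ m < n, PowerSeries.coeff m v = PowerSeries.coeff m w) :
    (X:P)^n ∣ v - w := by
  rw [PowerSeries.X_pow_dvd_iff]
  intro m hm
  rw [map_sub, h m hm, sub_self]

lemma cancel_smul (n : ℕ) (x : RQ) :
    ((12 + 4*n : ℕ) : RQ) * ((12 + 4*(n:ℚ))⁻¹ • x) = x := by
  have hq : (12 + 4*(n:ℚ)) ≠ 0 := by positivity
  rw [mul_smul_comm, ← nsmul_eq_mul, ← Nat.cast_smul_eq_nsmul ℚ, smul_smul,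
    show ((12+4*n:ℕ):ℚ) = 12+4*(n:ℚ) by push_cast; ring, inv_mul_cancel₀ hq, one_smul]

lemma Eps_eq_zero_iff (v : P) : Eps v = 0 ↔ ∀ n, PowerSeries.coeff (n+2) (Eps v) = 0 := by
  constructor
  · intro h n; rw [h]; simp
  · intro h
    have hdvd : (X:P)^2 ∣ Eps v := ⟨_, X_sq_dvd_Eps v⟩
    ext k
    match k with
    | 0 => rw [PowerSeries.X_pow_dvd_iff.mp hdvd 0 (by norm_num)]; simp
    | 1 => rw [PowerSeries.X_pow_dvd_iff.mp hdvd 1 (by norm_num)]; simp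
    | (m+2) => rw [h m]; simp

/-- The recursively-defined coefficients. -/
def aa : ℕ → RQ
  | n => ((12 + 4*(n:ℚ))⁻¹) •
      (PowerSeries.coeff (n+2) (Nps (PowerSeries.mk fun m => if h : m < n then aa m else 0)))
  decreasing_by exact h

lemma psMain : ∃! v : P, Eps v = 0 := by
  have hcoeff : ∀ (v : P) (n : ℕ), Eps v = 0 →
      ((12 + 4*n : ℕ) : RQ) * PowerSeries.coeff n v = PowerSeries.coeff (n+2) (Nps v) := by
    intro v n hv
    have := coeff_Eps v n
    rw [hv, map_zero] at this
    exact (sub_eq_zero.mp this.symm).symm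
  refine ⟨PowerSeries.mk aa, ?_, ?_⟩
  · show Eps (PowerSeries.mk aa) = 0
    rw [Eps_eq_zero_iff]
    intro n
    have hdvd : (X:P)^n ∣ PowerSeries.mk aa -
        PowerSeries.mk (fun m => if h : m < n then aa m else 0) := by
      apply agree_dvd
      intro m hm
      simp only [PowerSeries.coeff_mk, dif_pos hm]
    rw [coeff_Eps, Nps_coeff_congr hdvd, PowerSeries.coeff_mk, aa, cancel_smul, sub_self]
  · intro w hw
    have hv : Eps (PowerSeries.mk aa) = 0 := by
      rw [Eps_eq_zero_iff]
      intro n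
      have hdvd : (X:P)^n ∣ PowerSeries.mk aa -
          PowerSeries.mk (fun m => if h : m < n then aa m else 0) := by
        apply agree_dvd
        intro m hm
        simp only [PowerSeries.coeff_mk, dif_pos hm]
      rw [coeff_Eps, Nps_coeff_congr hdvd, PowerSeries.coeff_mk, aa, cancel_smul, sub_self]
    have key : ∀ n, PowerSeries.coeff n w = PowerSeries.coeff n (PowerSeries.mk aa) := by
      intro n
      induction n using Nat.strong_induction_on with
      | _ n ih =>
        have hdvd : (X:P)^n ∣ w - PowerSeries.mk aa := agree_dvd (fun m hm => ih m hm)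
        have h1 := hcoeff w n hw
        have h2 := hcoeff (PowerSeries.mk aa) n hv
        rw [Nps_coeff_congr hdvd, ← h2] at h1
        exact mul_left_cancel₀ (Nat.cast_ne_zero.mpr (by omega : (12+4*n:ℕ) ≠ 0)) h1
    exact PowerSeries.ext key

local notation "φ" => HahnSeries.ofPowerSeries ℤ RQ

lemma lsDeriv_coeff (f : LaurentSeries RQ) (n : ℤ) :
    (lsDeriv f).coeff n = (n + 1 : ℤ) • f.coeff (n + 1) := rfl

lemma lsDeriv_add (f g : LaurentSeries RQ) : lsDeriv (f + g) = lsDeriv f + lsDeriv g := by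
  ext n
  simp [lsDeriv_coeff, smul_add]

lemma phi_coeff (f : P) (n : ℤ) :
    (φ f).coeff n = if 0 ≤ n then PowerSeries.coeff n.toNat f else 0 := by
  by_cases h : 0 ≤ n
  · rw [if_pos h]
    lift n to ℕ using h
    rw [HahnSeries.ofPowerSeries_apply_coeff]
    norm_num
  · rw [if_neg h, HahnSeries.ofPowerSeries_apply, HahnSeries.embDomain_notin_range]
    rintro ⟨m, hm⟩
    have hm' : (m : ℤ) = n := hm
    omega

lemma lsDeriv_ofPS (f : P) : lsDeriv (φ f) = φ (D f) := by
  ext n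
  rw [lsDeriv_coeff, phi_coeff, phi_coeff]
  rcases le_or_gt 0 n with h | h
  · rw [if_pos h, if_pos (by omega)]
    have h1 : (n + 1).toNat = n.toNat + 1 := by omega
    rw [h1, PowerSeries.coeff_derivative, zsmul_eq_mul]
    have h2 : ((n + 1 : ℤ) : RQ) = ((n.toNat + 1 : ℕ) : RQ) := by
      have h3 : (n + 1 : ℤ) = ((n.toNat + 1 : ℕ) : ℤ) := by omega
      rw [h3, Int.cast_natCast]
    rw [h2]
    push_cast
    ring
  · rw [if_neg (show ¬(0:ℤ) ≤ n by omega)]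
    by_cases h2 : n = -1
    · subst h2
      norm_num
    · rw [if_neg (show ¬(0:ℤ) ≤ n + 1 by omega), smul_zero]

lemma lsDeriv_single :
    lsDeriv (HahnSeries.single (-2 : ℤ) (1 : RQ)) = HahnSeries.single (-3 : ℤ) (-2 : RQ) := by
  ext n : 2
  rw [lsDeriv_coeff, HahnSeries.coeff_single, HahnSeries.coeff_single]
  by_cases h : n = -3
  · subst h
    norm_num
  · rw [if_neg (by omega), if_neg h, smul_zero]

lemma single_six_unit : IsUnit (HahnSeries.single (6:ℤ) (1:RQ)) :=
  IsUnit.of_mul_eq_one (HahnSeries.single (-6:ℤ) 1) (by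
    rw [HahnSeries.single_mul_single]
    norm_num [HahnSeries.single_zero_one])

set_option maxHeartbeats 1000000 in
lemma key_iff (a : ℕ → RQ) :
    ((lsDeriv (wp a)) ^ 2 =
        4 * (wp a) ^ 3 - (HahnSeries.C gTwo : LaurentSeries RQ) * wp a -
          (HahnSeries.C gThree : LaurentSeries RQ))
      ↔ Eps (PowerSeries.mk a) = 0 := by
  set v : P := PowerSeries.mk a with hv
  have hwp : wp a = HahnSeries.single (-2:ℤ) 1 + φ v := rfl
  have hd : lsDeriv (wp a) = HahnSeries.single (-3:ℤ) (-2) + φ (D v) := by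
    rw [hwp, lsDeriv_add, lsDeriv_single, lsDeriv_ofPS]
  have h2 : (HahnSeries.single (2:ℤ) (1:RQ)) * HahnSeries.single (-2:ℤ) 1 = 1 := by
    rw [HahnSeries.single_mul_single]
    norm_num [HahnSeries.single_zero_one]
  have h3 : (HahnSeries.single (3:ℤ) (1:RQ)) * HahnSeries.single (-3:ℤ) (-2) =
      HahnSeries.C (-2 : RQ) := by
    rw [HahnSeries.single_mul_single, HahnSeries.C_apply]
    norm_num
  have hs2 : (HahnSeries.single (2:ℤ) (1:RQ)) = φ ((X:P)^2) := by
    rw [HahnSeries.ofPowerSeries_X_pow]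
    norm_num
  have hs3 : (HahnSeries.single (3:ℤ) (1:RQ)) = φ ((X:P)^3) := by
    rw [HahnSeries.ofPowerSeries_X_pow]
    norm_num
  have hC2 : ((-2 : P)) = PowerSeries.C (-2) := by
    rw [map_neg, map_ofNat]
  have hL : HahnSeries.single (3:ℤ) (1:RQ) * lsDeriv (wp a) = φ (Wps v) := by
    rw [hd, mul_add, h3, hs3, ← map_mul,
      show HahnSeries.C (-2:RQ) = φ (PowerSeries.C (-2)) from
        (HahnSeries.ofPowerSeries_C _).symm, ← map_add]
    congr 1
    unfold Wps
    rw [hC2]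
  have hU : HahnSeries.single (2:ℤ) (1:RQ) * wp a = φ (1 + (X:P)^2 * v) := by
    rw [hwp, mul_add, h2, hs2, ← map_mul, map_add, map_one]
  have e6 : HahnSeries.single (6:ℤ) (1:RQ) =
      HahnSeries.single (3:ℤ) 1 * HahnSeries.single (3:ℤ) 1 := by
    rw [HahnSeries.single_mul_single]
    norm_num
  have e6' : HahnSeries.single (6:ℤ) (1:RQ) =
      HahnSeries.single (2:ℤ) 1 * HahnSeries.single (2:ℤ) 1 * HahnSeries.single (2:ℤ) 1 := by
    rw [HahnSeries.single_mul_single, HahnSeries.single_mul_single]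
    norm_num
  rw [← single_six_unit.mul_right_inj]
  have cL : HahnSeries.single (6:ℤ) (1:RQ) * (lsDeriv (wp a))^2 = φ (Wps v ^ 2) := by
    rw [e6, show HahnSeries.single (3:ℤ) (1:RQ) * HahnSeries.single (3:ℤ) 1 * (lsDeriv (wp a))^2
        = (HahnSeries.single (3:ℤ) (1:RQ) * lsDeriv (wp a))^2 by ring, hL, ← map_pow]
  have cR : HahnSeries.single (6:ℤ) (1:RQ) *
      (4 * (wp a) ^ 3 - (HahnSeries.C gTwo : LaurentSeries RQ) * wp a -
        (HahnSeries.C gThree : LaurentSeries RQ)) = φ (Ups v) := by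
    rw [e6']
    calc HahnSeries.single (2:ℤ) (1:RQ) * HahnSeries.single (2:ℤ) 1 * HahnSeries.single (2:ℤ) 1 *
        (4 * (wp a) ^ 3 - (HahnSeries.C gTwo : LaurentSeries RQ) * wp a -
          (HahnSeries.C gThree : LaurentSeries RQ))
        = 4 * (HahnSeries.single (2:ℤ) (1:RQ) * wp a)^3
          - (HahnSeries.C gTwo : LaurentSeries RQ) *
            (HahnSeries.single (2:ℤ) (1:RQ) * HahnSeries.single (2:ℤ) 1 *
              (HahnSeries.single (2:ℤ) 1 * wp a))
          - (HahnSeries.C gThree : LaurentSeries RQ) *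
            (HahnSeries.single (2:ℤ) (1:RQ) * HahnSeries.single (2:ℤ) 1 *
              HahnSeries.single (2:ℤ) 1) := by ring
      _ = φ (Ups v) := by
          rw [hU, hs2,
            show (HahnSeries.C gTwo : LaurentSeries RQ) = φ (PowerSeries.C gTwo) from
              (HahnSeries.ofPowerSeries_C _).symm,
            show (HahnSeries.C gThree : LaurentSeries RQ) = φ (PowerSeries.C gThree) from
              (HahnSeries.ofPowerSeries_C _).symm,
            show (4 : LaurentSeries RQ) = φ (4 : P) from (map_ofNat _ 4).symm]
          simp only [← map_mul, ← map_pow, ← map_sub]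
          apply congrArg
          unfold Ups
          ring
  rw [cL, cR, HahnSeries.ofPowerSeries_injective.eq_iff]
  unfold Eps
  rw [sub_eq_zero]

/-- There is a unique family `(aₙ)` in `ℚ[g₂,g₃]` such that `℘` satisfies
`(℘′)² = 4℘³ − g₂·℘ − g₃` in `ℚ[g₂,g₃]((p))`. -/
theorem statement0 :
    ∃! a : ℕ → RQ,
      (lsDeriv (wp a)) ^ 2 =
        4 * (wp a) ^ 3 - (HahnSeries.C gTwo : LaurentSeries RQ) * wp a -
          (HahnSeries.C gThree : LaurentSeries RQ) := by
  obtain ⟨v, hv, hu⟩ := psMain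
  have hmk : PowerSeries.mk (fun n => PowerSeries.coeff n v) = v :=
    PowerSeries.ext fun n => by rw [PowerSeries.coeff_mk]
  refine ⟨fun n => PowerSeries.coeff n v, ?_, ?_⟩
  · show (lsDeriv (wp _)) ^ 2 = _
    rw [key_iff, hmk]
    exact hv
  · intro a ha
    rw [key_iff] at ha
    have h := hu _ ha
    funext n
    rw [← h, PowerSeries.coeff_mk]
end
end

section
/- There is a unique Lie algebra morphism 𝔱_{1,n} → 𝔊 over k determined by x_i ↦ X_i (1 ≤ i ≤ n), y_i ↦ Y_i (1 ≤ i ≤ n), t_{ij} ↦ −T_{ij}^0 for i < j, and t_{ij} ↦ −T_{ji}^0 for i > j. -/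
/-! The elliptic braid Lie algebra `𝔱_{1,n}` presented by generators and relations. -/

noncomputable section

/-- Generators of `𝔱_{1,n}`: `x i`, `y i` for `i ∈ [n]` and `t i j` for `i ≠ j`. -/
inductive TGen (n : ℕ) : Type
  | x : Fin n → TGen n
  | y : Fin n → TGen n
  | t : (i j : Fin n) → i ≠ j → TGen n

variable (k : Type) [Field k] [CharZero k] (n : ℕ)

/-- The free Lie algebra on the generators of `𝔱_{1,n}`. -/
abbrev FT : Type := FreeLieAlgebra k (TGen n)

/-- The generator `x i` in the free Lie algebra. -/
def fx (i : Fin n) : FT k n := FreeLieAlgebra.of k (TGen.x i)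

/-- The generator `y i` in the free Lie algebra. -/
def fy (i : Fin n) : FT k n := FreeLieAlgebra.of k (TGen.y i)

/-- The generator `t i j` (for `i ≠ j`) in the free Lie algebra. -/
def ft (i j : Fin n) (h : i ≠ j) : FT k n := FreeLieAlgebra.of k (TGen.t i j h)

/-- The defining relations of `𝔱_{1,n}`. -/
inductive TRel : FT k n → Prop
  | xx (i j : Fin n) : TRel ⁅fx k n i, fx k n j⁆
  | yy (i j : Fin n) : TRel ⁅fy k n i, fy k n j⁆
  | xy (i j : Fin n) (h : i ≠ j) : TRel (⁅fx k n i, fy k n j⁆ - ft k n i j h)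
  | xyDiag (i : Fin n) :
      TRel (⁅fx k n i, fy k n i⁆ + ∑ j : Fin n, if h : i ≠ j then ft k n i j h else 0)
  | xt (i j l : Fin n) (h : i ≠ j) (h1 : l ≠ i) (h2 : l ≠ j) :
      TRel ⁅fx k n l, ft k n i j h⁆
  | yt (i j l : Fin n) (h : i ≠ j) (h1 : l ≠ i) (h2 : l ≠ j) :
      TRel ⁅fy k n l, ft k n i j h⁆
  | xxt (i j : Fin n) (h : i ≠ j) : TRel ⁅fx k n i + fx k n j, ft k n i j h⁆
  | yyt (i j : Fin n) (h : i ≠ j) : TRel ⁅fy k n i + fy k n j, ft k n i j h⁆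
  | tsymm (i j : Fin n) (h : i ≠ j) : TRel (ft k n i j h - ft k n j i h.symm)

/-- The Lie ideal of relations of `𝔱_{1,n}`. -/
abbrev tIdeal : LieIdeal k (FT k n) :=
  LieSubmodule.lieSpan k (FT k n) {a | TRel k n a}

/-- The Lie algebra `𝔱_{1,n}`. -/
abbrev T1 : Type := FT k n ⧸ tIdeal k n

/-- The generator `x i` of `𝔱_{1,n}`. -/
def tx (i : Fin n) : T1 k n := LieSubmodule.Quotient.mk (N := tIdeal k n) (fx k n i)

/-- The generator `y i` of `𝔱_{1,n}`. -/
def ty (i : Fin n) : T1 k n := LieSubmodule.Quotient.mk (N := tIdeal k n) (fy k n i)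

/-- The generator `t i j` (for `i ≠ j`) of `𝔱_{1,n}`. -/
def tt (i j : Fin n) (h : i ≠ j) : T1 k n :=
  LieSubmodule.Quotient.mk (N := tIdeal k n) (ft k n i j h)

/-- The adjoint operator `ad x : 𝔱_{1,n} → 𝔱_{1,n}`. -/
def adT (v : T1 k n) : Module.End k (T1 k n) := LieAlgebra.ad k (T1 k n) v

/-- Generators of `𝔊`: `X i`, `Y i` for `i ∈ [n]`, and `T i j α` for `i < j`, `α ≥ 0`. -/
inductive GGen (n : ℕ) : Type
  | X : Fin n → GGen n
  | Y : Fin n → GGen n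
  | T : (i j : Fin n) → i < j → ℕ → GGen n

/-- The free Lie algebra on the generators of `𝔊`. -/
abbrev FG : Type := FreeLieAlgebra k (GGen n)

/-- The generator `X i` in the free Lie algebra. -/
def gX (i : Fin n) : FG k n := FreeLieAlgebra.of k (GGen.X i)

/-- The generator `Y i` in the free Lie algebra. -/
def gY (i : Fin n) : FG k n := FreeLieAlgebra.of k (GGen.Y i)

/-- The generator `T i j α` (for `i < j`) in the free Lie algebra. -/
def gT (i j : Fin n) (h : i < j) (α : ℕ) : FG k n :=
  FreeLieAlgebra.of k (GGen.T i j h α)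

/-- The defining relations of `𝔊`.  Sums `Σ_{γ+δ=α+β}` are written as sums over
`γ ∈ {0,…,α+β}` with `δ = α+β−γ`; sums `Σ_{γ+δ=α−1}` as sums over `γ ∈ {0,…,α−1}`
with `δ = α−1−γ` (empty for `α = 0`); `C(a,b)` is `Nat.choose a b` (zero if `b > a`). -/
inductive GRel : FG k n → Prop
  | XX (i j : Fin n) : GRel ⁅gX k n i, gX k n j⁆
  | YY (i j : Fin n) : GRel ⁅gY k n i, gY k n j⁆
  | XYdiag (i : Fin n) :
      GRel (⁅gX k n i, gY k n i⁆
        - (∑ j : Fin n, if h : i < j then gT k n i j h 0 else 0)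
        - (∑ j : Fin n, if h : j < i then gT k n j i h 0 else 0))
  | XYlt (i j : Fin n) (h : i < j) : GRel (⁅gX k n i, gY k n j⁆ + gT k n i j h 0)
  | XYgt (i j : Fin n) (h : j < i) : GRel (⁅gX k n i, gY k n j⁆ + gT k n j i h 0)
  | XT (i j l : Fin n) (h : i < j) (h1 : l ≠ i) (h2 : l ≠ j) (α : ℕ) :
      GRel ⁅gX k n l, gT k n i j h α⁆
  | XTi (i j : Fin n) (h : i < j) (α : ℕ) :
      GRel (⁅gX k n i, gT k n i j h α⁆ - gT k n i j h (α + 1))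
  | XTj (i j : Fin n) (h : i < j) (α : ℕ) :
      GRel (⁅gX k n j, gT k n i j h α⁆ + gT k n i j h (α + 1))
  | TT (i j l m : Fin n) (hij : i < j) (hlm : l < m) (hil : i < l)
      (d1 : j ≠ l) (d2 : j ≠ m) (α β : ℕ) :
      GRel ⁅gT k n i j hij α, gT k n l m hlm β⁆
  | TTadj (i j l : Fin n) (hij : i < j) (hjl : j < l) (α β : ℕ) :
      GRel (⁅gT k n i j hij α, gT k n j l hjl β⁆
        + ∑ γ ∈ Finset.range (α + β + 1), (Nat.choose α γ : k) •
            ⁅gT k n i j hij γ, gT k n i l (hij.trans hjl) (α + β - γ)⁆)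
  | TTadj' (i j l : Fin n) (hij : i < j) (hjl : j < l) (α β : ℕ) :
      GRel (⁅gT k n i l (hij.trans hjl) α, gT k n j l hjl β⁆
        + ∑ γ ∈ Finset.range (α + β + 1),
            ((-1 : k) ^ (β + 1) * (Nat.choose α (α + β - γ) : k)) •
            ⁅gT k n i j hij γ, gT k n i l (hij.trans hjl) (α + β - γ)⁆)
  | YTlt (i j l : Fin n) (hij : i < j) (hli : l < i) (α : ℕ) :
      GRel (⁅gY k n l, gT k n i j hij α⁆
        + ∑ γ ∈ Finset.range α, ((-1 : k) ^ γ) •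
            ⁅gT k n l i hli γ, gT k n l j (hli.trans hij) (α - 1 - γ)⁆)
  | YTmid (i j l : Fin n) (hil : i < l) (hlj : l < j) (α : ℕ) :
      GRel (⁅gY k n l, gT k n i j (hil.trans hlj) α⁆
        - ∑ γ ∈ Finset.range α, (Nat.choose α (α - 1 - γ) : k) •
            ⁅gT k n i l hil γ, gT k n i j (hil.trans hlj) (α - 1 - γ)⁆)
  | YTgt (i j l : Fin n) (hij : i < j) (hjl : j < l) (α : ℕ) :
      GRel (⁅gY k n l, gT k n i j hij α⁆
        + ∑ γ ∈ Finset.range α, (Nat.choose α γ : k) •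
            ⁅gT k n i j hij γ, gT k n i l (hij.trans hjl) (α - 1 - γ)⁆)
  | YYT (i j : Fin n) (hij : i < j) (α : ℕ) :
      GRel (⁅gY k n i + gY k n j, gT k n i j hij α⁆
        + (∑ l : Fin n, if h : i < l ∧ l < j then
            ∑ γ ∈ Finset.range α, (Nat.choose α (α - 1 - γ) : k) •
              ⁅gT k n i l h.1 γ, gT k n i j hij (α - 1 - γ)⁆ else 0)
        - (∑ l : Fin n, if h : j < l then
            ∑ γ ∈ Finset.range α, (Nat.choose α γ : k) •
              ⁅gT k n i j hij γ, gT k n i l (hij.trans h) (α - 1 - γ)⁆ else 0)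
        + (∑ l : Fin n, if h : l < i then
            ∑ γ ∈ Finset.range α, ((-1 : k) ^ (γ + 1)) •
              ⁅gT k n l i h γ, gT k n l j (h.trans hij) (α - 1 - γ)⁆ else 0))

/-- The Lie ideal of relations of `𝔊`. -/
abbrev gIdeal : LieIdeal k (FG k n) :=
  LieSubmodule.lieSpan k (FG k n) {a | GRel k n a}

/-- The Lie algebra `𝔊`. -/
abbrev GLie : Type := FG k n ⧸ gIdeal k n

/-- The generator `X i` of `𝔊`. -/
def GXe (i : Fin n) : GLie k n := LieSubmodule.Quotient.mk (N := gIdeal k n) (gX k n i)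

/-- The generator `Y i` of `𝔊`. -/
def GYe (i : Fin n) : GLie k n := LieSubmodule.Quotient.mk (N := gIdeal k n) (gY k n i)

/-- The generator `T i j α` (for `i < j`) of `𝔊`. -/
def GTe (i j : Fin n) (h : i < j) (α : ℕ) : GLie k n :=
  LieSubmodule.Quotient.mk (N := gIdeal k n) (gT k n i j h α)

/-! ### Auxiliary material for the proof -/

/-- Lift a Lie algebra morphism vanishing on an ideal to the quotient. -/
def LieIdealLift {R L L' : Type*} [CommRing R] [LieRing L] [LieAlgebra R L]
    [LieRing L'] [LieAlgebra R L'] (I : LieIdeal R L) (f : L →ₗ⁅R⁆ L')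
    (h : ∀ x ∈ I, f x = 0) : (L ⧸ I) →ₗ⁅R⁆ L' :=
  { Submodule.liftQ (I : Submodule R L) (f : L →ₗ[R] L') (fun x hx => h x hx) with
    map_lie' := by rintro ⟨x⟩ ⟨y⟩; exact f.map_lie x y }

theorem LieIdealLift_mk {R L L' : Type*} [CommRing R] [LieRing L] [LieAlgebra R L]
    [LieRing L'] [LieAlgebra R L'] (I : LieIdeal R L) (f : L →ₗ⁅R⁆ L')
    (h : ∀ x ∈ I, f x = 0) (x : L) :
    LieIdealLift I f h (LieSubmodule.Quotient.mk (N := I) x) = f x := rfl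


theorem lieHom_map_sum {R L L' : Type*} [CommRing R] [LieRing L] [LieAlgebra R L]
    [LieRing L'] [LieAlgebra R L'] (f : L →ₗ⁅R⁆ L') {ι : Type*} (s : Finset ι)
    (g : ι → L) : f (∑ i ∈ s, g i) = ∑ i ∈ s, f (g i) :=
  map_sum (f : L →ₗ[R] L') g s

/-- The quotient map `FG → 𝔊` as a Lie algebra morphism. -/
def gq : FG k n →ₗ⁅k⁆ GLie k n :=
  { ((gIdeal k n : LieIdeal k (FG k n)) : Submodule k (FG k n)).mkQ with
    map_lie' := rfl }

theorem gq_apply (a : FG k n) :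
    gq k n a = LieSubmodule.Quotient.mk (N := gIdeal k n) a := rfl

theorem grel_zero {a : FG k n} (h : GRel k n a) : gq k n a = 0 := by
  rw [gq_apply]
  exact (LieSubmodule.Quotient.mk_eq_zero _).2 (LieSubmodule.subset_lieSpan h)

theorem GXe_def (i : Fin n) : GXe k n i = gq k n (gX k n i) := rfl
theorem GYe_def (i : Fin n) : GYe k n i = gq k n (gY k n i) := rfl
theorem GTe_def (i j : Fin n) (h : i < j) (α : ℕ) :
    GTe k n i j h α = gq k n (gT k n i j h α) := rfl

/-- The quotient map `FT → 𝔱_{1,n}` as a Lie algebra morphism. -/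
def tq : FT k n →ₗ⁅k⁆ T1 k n :=
  { ((tIdeal k n : LieIdeal k (FT k n)) : Submodule k (FT k n)).mkQ with
    map_lie' := rfl }

/-- Image of the generators of `𝔱_{1,n}` in `𝔊`. -/
def genMap : TGen n → GLie k n
  | TGen.x i => GXe k n i
  | TGen.y i => GYe k n i
  | TGen.t i j h =>
      if hij : i < j then -GTe k n i j hij 0
      else -GTe k n j i (h.lt_or_gt.resolve_left hij) 0

/-- The induced morphism on the free Lie algebra. -/
def phi0 : FT k n →ₗ⁅k⁆ GLie k n := FreeLieAlgebra.lift k (genMap k n)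

theorem phi0_fx (i : Fin n) : phi0 k n (fx k n i) = GXe k n i := by
  rw [fx, phi0, FreeLieAlgebra.lift_of_apply]; rfl

theorem phi0_fy (i : Fin n) : phi0 k n (fy k n i) = GYe k n i := by
  rw [fy, phi0, FreeLieAlgebra.lift_of_apply]; rfl

theorem phi0_ft (i j : Fin n) (h : i ≠ j) :
    phi0 k n (ft k n i j h) =
      if hij : i < j then -GTe k n i j hij 0
      else -GTe k n j i (h.lt_or_gt.resolve_left hij) 0 := by
  rw [ft, phi0, FreeLieAlgebra.lift_of_apply]; rfl

theorem phi0_ft_lt (i j : Fin n) (h : i < j) :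
    phi0 k n (ft k n i j h.ne) = -GTe k n i j h 0 := by
  rw [phi0_ft, dif_pos h]

theorem phi0_ft_gt (i j : Fin n) (h : j < i) :
    phi0 k n (ft k n i j h.ne') = -GTe k n j i h 0 := by
  rw [phi0_ft, dif_neg (asymm h)]

theorem phi0_vanishes : ∀ a ∈ tIdeal k n, phi0 k n a = 0 := by
  have : tIdeal k n ≤ (phi0 k n).ker := by
    rw [LieSubmodule.lieSpan_le]
    intro a ha
    rw [SetLike.mem_coe, LieHom.mem_ker]
    induction ha with
    | xx i j =>
        rw [LieHom.map_lie, phi0_fx, phi0_fx, GXe_def, GXe_def, ← LieHom.map_lie]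
        exact grel_zero k n (GRel.XX i j)
    | yy i j =>
        rw [LieHom.map_lie, phi0_fy, phi0_fy, GYe_def, GYe_def, ← LieHom.map_lie]
        exact grel_zero k n (GRel.YY i j)
    | xy i j h =>
        rw [map_sub, LieHom.map_lie, phi0_fx, phi0_fy]
        rcases h.lt_or_gt with hij | hji
        · rw [phi0_ft_lt k n i j hij, sub_neg_eq_add, GXe_def, GYe_def, GTe_def,
            ← LieHom.map_lie, ← map_add]
          exact grel_zero k n (GRel.XYlt i j hij)
        · rw [phi0_ft_gt k n i j hji, sub_neg_eq_add, GXe_def, GYe_def, GTe_def,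
            ← LieHom.map_lie, ← map_add]
          exact grel_zero k n (GRel.XYgt i j hji)
    | xyDiag i =>
        have key := grel_zero k n (GRel.XYdiag i)
        rw [map_sub, map_sub, LieHom.map_lie, lieHom_map_sum, lieHom_map_sum] at key
        simp only [apply_dite (gq k n), map_zero] at key
        rw [map_add, LieHom.map_lie, phi0_fx, phi0_fy, lieHom_map_sum]
        have hsum : ∀ j : Fin n,
            phi0 k n (if h : i ≠ j then ft k n i j h else 0) =
              -(if h : i < j then gq k n (gT k n i j h 0) else 0)
              + -(if h : j < i then gq k n (gT k n j i h 0) else 0) := by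
          intro j
          rcases lt_trichotomy i j with h | h | h
          · rw [dif_pos h.ne, phi0_ft, dif_pos h, dif_pos h, dif_neg (asymm h),
              GTe_def, neg_zero, add_zero]
          · subst h
            rw [dif_neg (fun hc => hc rfl)]
            simp
          · rw [dif_pos h.ne', phi0_ft, dif_neg (asymm h), dif_neg (asymm h), dif_pos h,
              GTe_def, neg_zero, zero_add]
        rw [Finset.sum_congr rfl (fun j _ => hsum j), Finset.sum_add_distrib,
          Finset.sum_neg_distrib, Finset.sum_neg_distrib, GXe_def, GYe_def,
          ← add_assoc, ← sub_eq_add_neg, ← sub_eq_add_neg]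
        exact key
    | xt i j l h h1 h2 =>
        rw [LieHom.map_lie, phi0_fx, phi0_ft]
        split
        · next hij =>
            rw [lie_neg, neg_eq_zero, GXe_def, GTe_def, ← LieHom.map_lie]
            exact grel_zero k n (GRel.XT i j l hij h1 h2 0)
        · next hij =>
            rw [lie_neg, neg_eq_zero, GXe_def, GTe_def, ← LieHom.map_lie]
            exact grel_zero k n (GRel.XT j i l (h.lt_or_gt.resolve_left hij) h2 h1 0)
    | yt i j l h h1 h2 =>
        have main : ∀ (a b : Fin n) (hab : a < b), l ≠ a → l ≠ b →
            ⁅GYe k n l, GTe k n a b hab 0⁆ = 0 := by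
          intro a b hab ha hb
          rcases ha.lt_or_gt with hla | hal
          · have := grel_zero k n (GRel.YTlt a b l hab hla 0)
            simpa [GYe_def, GTe_def, LieHom.map_lie] using this
          · rcases hb.lt_or_gt with hlb | hbl
            · have := grel_zero k n (GRel.YTmid a b l hal hlb 0)
              simpa [GYe_def, GTe_def, LieHom.map_lie] using this
            · have := grel_zero k n (GRel.YTgt a b l hab hbl 0)
              simpa [GYe_def, GTe_def, LieHom.map_lie] using this
        rw [LieHom.map_lie, phi0_fy, phi0_ft]
        split
        · next hij => rw [lie_neg, neg_eq_zero]; exact main i j hij h1 h2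
        · next hij =>
            rw [lie_neg, neg_eq_zero]
            exact main j i (h.lt_or_gt.resolve_left hij) h2 h1
    | xxt i j h =>
        have main : ∀ (a b : Fin n) (hab : a < b),
            ⁅GXe k n a + GXe k n b, GTe k n a b hab 0⁆ = 0 := by
          intro a b hab
          have h1 := grel_zero k n (GRel.XTi a b hab 0)
          have h2 := grel_zero k n (GRel.XTj a b hab 0)
          rw [map_sub, LieHom.map_lie, sub_eq_zero] at h1
          rw [map_add, LieHom.map_lie, add_eq_zero_iff_eq_neg] at h2
          rw [add_lie, GXe_def, GTe_def, h1, GXe_def k n b, h2, add_neg_cancel]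
        rw [LieHom.map_lie, map_add, phi0_fx, phi0_fx, phi0_ft]
        rcases h.lt_or_gt with hij | hji
        · rw [dif_pos hij, lie_neg, neg_eq_zero]; exact main i j hij
        · rw [dif_neg (asymm hji), lie_neg, neg_eq_zero]
          rw [show GXe k n i + GXe k n j = GXe k n j + GXe k n i from add_comm _ _]
          exact main j i hji
    | yyt i j h =>
        have main : ∀ (a b : Fin n) (hab : a < b),
            ⁅GYe k n a + GYe k n b, GTe k n a b hab 0⁆ = 0 := by
          intro a b hab
          have key := grel_zero k n (GRel.YYT a b hab 0)
          simp only [Finset.range_zero, Finset.sum_empty, dite_eq_ite, ite_self,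
            Finset.sum_const_zero, add_zero, sub_zero] at key
          simpa [GYe_def, GTe_def, LieHom.map_lie] using key
        rw [LieHom.map_lie, map_add, phi0_fy, phi0_fy, phi0_ft]
        rcases h.lt_or_gt with hij | hji
        · rw [dif_pos hij, lie_neg, neg_eq_zero]; exact main i j hij
        · rw [dif_neg (asymm hji), lie_neg, neg_eq_zero]
          rw [show GYe k n i + GYe k n j = GYe k n j + GYe k n i from add_comm _ _]
          exact main j i hji
    | tsymm i j h =>
        rw [map_sub, sub_eq_zero]
        rcases h.lt_or_gt with hij | hji
        · rw [phi0_ft_lt k n i j hij, phi0_ft_gt k n j i hij]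
        · rw [phi0_ft_gt k n i j hji, phi0_ft_lt k n j i hji]
  exact fun a ha => this ha

/-- there is a unique Lie algebra morphism `𝔱_{1,n} → 𝔊` with
`x_i ↦ X_i`, `y_i ↦ Y_i`, `t_{ij} ↦ −T_{ij}⁰` for `i < j` and
`t_{ij} ↦ −T_{ji}⁰` for `i > j`. -/
theorem statement11 :
    ∃! φ : T1 k n →ₗ⁅k⁆ GLie k n,
      (∀ i : Fin n, φ (tx k n i) = GXe k n i) ∧
      (∀ i : Fin n, φ (ty k n i) = GYe k n i) ∧
      (∀ (i j : Fin n) (h : i < j), φ (tt k n i j h.ne) = -GTe k n i j h 0) ∧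
      (∀ (i j : Fin n) (h : j < i), φ (tt k n i j h.ne') = -GTe k n j i h 0) := by
  refine ⟨LieIdealLift (tIdeal k n) (phi0 k n) (phi0_vanishes k n), ⟨?_, ?_, ?_, ?_⟩, ?_⟩
  · intro i; rw [tx, LieIdealLift_mk, phi0_fx]
  · intro i; rw [ty, LieIdealLift_mk, phi0_fy]
  · intro i j h; rw [tt, LieIdealLift_mk, phi0_ft_lt]
  · intro i j h; rw [tt, LieIdealLift_mk, phi0_ft_gt]
  · rintro ψ ⟨hx, hy, ht1, ht2⟩
    have hcomp : ψ.comp (tq k n) =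
        (LieIdealLift (tIdeal k n) (phi0 k n) (phi0_vanishes k n)).comp (tq k n) := by
      apply FreeLieAlgebra.hom_ext
      intro g
      cases g with
      | x i =>
          show ψ (tx k n i) = _
          rw [hx i]
          exact (phi0_fx k n i).symm
      | y i =>
          show ψ (ty k n i) = _
          rw [hy i]
          exact (phi0_fy k n i).symm
      | t i j h =>
          show ψ (tt k n i j h) = _
          rcases h.lt_or_gt with hij | hji
          · rw [show h = hij.ne from rfl, ht1 i j hij]
            exact (phi0_ft_lt k n i j hij).symm
          · rw [show h = hji.ne' from rfl, ht2 i j hji]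
            exact (phi0_ft_gt k n i j hji).symm
    refine LieHom.ext fun z => ?_
    obtain ⟨a, rfl⟩ := Quotient.mk''_surjective z
    exact LieHom.congr_fun hcomp a
end
end

section
/- There is a unique Lie algebra morphism 𝔊 → 𝔱_{1,n} over k determined by X_i ↦ x_i (1 ≤ i ≤ n), Y_i ↦ y_i (1 ≤ i ≤ n), and T_{ij}^α ↦ −(ad x_i)^α(t_{ij}) for 1 ≤ i < j ≤ n and α ≥ 0. -/
/-! The elliptic braid Lie algebra `𝔱_{1,n}` presented by generators and relations. -/

noncomputable section

variable (k : Type) [Field k] [CharZero k] (n : ℕ)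

namespace Statement12Aux

/-! ### General helper lemmas about iterated adjoint operators -/

section Helpers

variable (K : Type) [Field K] {L : Type} [LieRing L] [LieAlgebra K L]

lemma adp_succ (x z : L) (α : ℕ) :
    ((LieAlgebra.ad K L x) ^ (α + 1)) z = ⁅x, ((LieAlgebra.ad K L x) ^ α) z⁆ := by
  rw [pow_succ', Module.End.mul_apply, LieAlgebra.ad_apply]

lemma adp_succ' (x z : L) (α : ℕ) :
    ((LieAlgebra.ad K L x) ^ (α + 1)) z = ((LieAlgebra.ad K L x) ^ α) ⁅x, z⁆ := by
  rw [pow_succ, Module.End.mul_apply, LieAlgebra.ad_apply]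

lemma lie_adp {x y : L} (h : ⁅x, y⁆ = 0) (z : L) (α : ℕ) :
    ⁅y, ((LieAlgebra.ad K L x) ^ α) z⁆ = ((LieAlgebra.ad K L x) ^ α) ⁅y, z⁆ := by
  induction α with
  | zero => simp
  | succ α ih =>
    rw [adp_succ, adp_succ, leibniz_lie, show ⁅y, x⁆ = (0 : L) by
        rw [← lie_skew, h, neg_zero], zero_lie, zero_add, ih]

lemma adp_lie_zero {x w z : L} (hxz : ⁅x, z⁆ = 0) (hwz : ⁅w, z⁆ = 0) (α : ℕ) :
    ⁅((LieAlgebra.ad K L x) ^ α) w, z⁆ = 0 := by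
  induction α with
  | zero => simpa
  | succ α ih => rw [adp_succ, lie_lie, ih, hxz, lie_zero, lie_zero, sub_zero]

lemma lie_sum' {ι : Type} (x : L) (s : Finset ι) (f : ι → L) :
    ⁅x, ∑ i ∈ s, f i⁆ = ∑ i ∈ s, ⁅x, f i⁆ := by
  induction s using Finset.cons_induction with
  | empty => simp
  | cons a s ha ih => simp only [Finset.sum_cons, lie_add, ih]

lemma sum_lie' {ι : Type} (x : L) (s : Finset ι) (f : ι → L) :
    ⁅∑ i ∈ s, f i, x⁆ = ∑ i ∈ s, ⁅f i, x⁆ := by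
  induction s using Finset.cons_induction with
  | empty => simp
  | cons a s ha ih => simp only [Finset.sum_cons, add_lie, ih]

/-! ### Binomial sum reshuffling lemmas -/

variable {M : Type} [AddCommGroup M] [Module K M]

lemma pascal_core (α N : ℕ) (H : ℕ → M) :
    ∑ γ ∈ Finset.range (N + 2), (((α+1).choose γ : K)) • H γ
      = (∑ γ ∈ Finset.range (N + 1), ((α.choose γ : K)) • H (γ + 1))
        + ∑ γ ∈ Finset.range (N + 2), ((α.choose γ : K)) • H γ := by
  rw [Finset.sum_range_succ' (fun γ => (((α+1).choose γ : K)) • H γ) (N + 1)]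
  rw [Finset.sum_range_succ' (fun γ => ((α.choose γ : K)) • H γ) (N + 1)]
  have : ∀ γ, (((α+1).choose (γ+1) : K)) • H (γ+1)
      = ((α.choose γ : K)) • H (γ+1) + ((α.choose (γ+1) : K)) • H (γ+1) := fun γ => by
    rw [Nat.choose_succ_succ, Nat.cast_add, add_smul]
  rw [Finset.sum_congr rfl fun γ _ => this γ, Finset.sum_add_distrib]
  simp only [Nat.choose_zero_right, Nat.cast_one]
  abel

lemma pascal_sum2 (α : ℕ) (H : ℕ → M) :
    ∑ γ ∈ Finset.range (α + 1), (((α+1).choose γ : K)) • H γ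
      = H α + (∑ γ ∈ Finset.range α, ((α.choose γ : K)) • H (γ + 1))
        + ∑ γ ∈ Finset.range α, ((α.choose γ : K)) • H γ := by
  rw [Finset.sum_range_succ' (fun γ => (((α+1).choose γ : K)) • H γ) α]
  have hsplit : ∀ γ, (((α+1).choose (γ+1) : K)) • H (γ+1)
      = ((α.choose γ : K)) • H (γ+1) + ((α.choose (γ+1) : K)) • H (γ+1) := fun γ => by
    rw [Nat.choose_succ_succ, Nat.cast_add, add_smul]
  rw [Finset.sum_congr rfl fun γ _ => hsplit γ, Finset.sum_add_distrib]
  have h2 : (∑ γ ∈ Finset.range α, ((α.choose (γ+1) : K)) • H (γ+1))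
      = (∑ γ ∈ Finset.range α, ((α.choose γ : K)) • H γ) + H α - H 0 := by
    have ha := Finset.sum_range_succ' (fun γ => ((α.choose γ : K)) • H γ) α
    have hb := Finset.sum_range_succ (fun γ => ((α.choose γ : K)) • H γ) α
    rw [hb] at ha
    simp only [Nat.choose_zero_right, Nat.cast_one, Nat.choose_self, one_smul] at ha
    exact eq_sub_of_add_eq ha.symm
  rw [h2]
  simp only [Nat.choose_zero_right, Nat.cast_one, one_smul]
  abel

end Helpers

end Statement12Aux

namespace Statement12Aux

set_option linter.unusedSectionVars false

section T1Facts

variable (k : Type) [Field k] [CharZero k] (n : ℕ)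

/-- The quotient map `FT → 𝔱_{1,n}` as a morphism of Lie algebras. -/
def tmk : FT k n →ₗ⁅k⁆ T1 k n :=
  { (tIdeal k n).toSubmodule.mkQ with map_lie' := fun {_ _} => rfl }

@[simp] lemma tmk_fx (i : Fin n) : tmk k n (fx k n i) = tx k n i := rfl
@[simp] lemma tmk_fy (i : Fin n) : tmk k n (fy k n i) = ty k n i := rfl
@[simp] lemma tmk_ft (i j : Fin n) (h : i ≠ j) : tmk k n (ft k n i j h) = tt k n i j h := rfl

lemma lieHom_sum {R L₁ L₂ : Type*} [CommRing R] [LieRing L₁] [LieAlgebra R L₁]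
    [LieRing L₂] [LieAlgebra R L₂] (f : L₁ →ₗ⁅R⁆ L₂) {ι : Type} (s : Finset ι) (g : ι → L₁) :
    f (∑ i ∈ s, g i) = ∑ i ∈ s, f (g i) := by
  induction s using Finset.cons_induction with
  | empty => simp
  | cons a s ha ih => simp only [Finset.sum_cons, map_add, ih]

lemma trel {z : FT k n} (h : TRel k n z) : tmk k n z = 0 :=
  (Submodule.Quotient.mk_eq_zero _).mpr (LieSubmodule.subset_lieSpan (R := k) (L := FT k n) h)

lemma rxx (i j : Fin n) : ⁅tx k n i, tx k n j⁆ = 0 := by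
  simpa using trel k n (TRel.xx i j)

lemma ryy (i j : Fin n) : ⁅ty k n i, ty k n j⁆ = 0 := by
  simpa using trel k n (TRel.yy i j)

lemma rxy (i j : Fin n) (h : i ≠ j) : ⁅tx k n i, ty k n j⁆ = tt k n i j h := by
  have := trel k n (TRel.xy i j h)
  simp only [map_sub, LieHom.map_lie, tmk_fx, tmk_fy, tmk_ft] at this
  exact sub_eq_zero.mp this

lemma rdiag (i : Fin n) :
    ⁅tx k n i, ty k n i⁆ + ∑ j : Fin n, (if h : i ≠ j then tt k n i j h else 0) = 0 := by
  have := trel k n (TRel.xyDiag i)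
  simpa only [map_add, LieHom.map_lie, lieHom_sum, apply_dite (tmk k n),
    map_zero, tmk_fx, tmk_fy, tmk_ft] using this

lemma rxt (i j l : Fin n) (h : i ≠ j) (h1 : l ≠ i) (h2 : l ≠ j) :
    ⁅tx k n l, tt k n i j h⁆ = 0 := by
  simpa using trel k n (TRel.xt i j l h h1 h2)

lemma ryt (i j l : Fin n) (h : i ≠ j) (h1 : l ≠ i) (h2 : l ≠ j) :
    ⁅ty k n l, tt k n i j h⁆ = 0 := by
  simpa using trel k n (TRel.yt i j l h h1 h2)

lemma rxxt (i j : Fin n) (h : i ≠ j) :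
    ⁅tx k n i, tt k n i j h⁆ = -⁅tx k n j, tt k n i j h⁆ := by
  have := trel k n (TRel.xxt i j h)
  simp only [LieHom.map_lie, map_add, add_lie, tmk_fx, tmk_ft] at this
  exact eq_neg_of_add_eq_zero_left this

lemma ryyt (i j : Fin n) (h : i ≠ j) :
    ⁅ty k n i, tt k n i j h⁆ = -⁅ty k n j, tt k n i j h⁆ := by
  have := trel k n (TRel.yyt i j h)
  simp only [LieHom.map_lie, map_add, add_lie, tmk_fy, tmk_ft] at this
  exact eq_neg_of_add_eq_zero_left this

lemma rsymm (i j : Fin n) (h : i ≠ j) : tt k n i j h = tt k n j i h.symm := by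
  have := trel k n (TRel.tsymm i j h)
  simp only [map_sub, tmk_ft] at this
  exact sub_eq_zero.mp this

/-! ### The elements `u_{ij}^α = (ad x_i)^α t_{ij}` -/

/-- `u_{ij}^α = (ad x_i)^α (t_{ij})`. -/
def uu (i j : Fin n) (h : i ≠ j) (α : ℕ) : T1 k n :=
  ((adT k n (tx k n i)) ^ α) (tt k n i j h)

lemma adT_eq (v : T1 k n) : adT k n v = LieAlgebra.ad k (T1 k n) v := rfl

lemma uu_zero (i j : Fin n) (h : i ≠ j) : uu k n i j h 0 = tt k n i j h := by
  simp [uu]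

lemma uu_succ (i j : Fin n) (h : i ≠ j) (α : ℕ) :
    uu k n i j h (α + 1) = ⁅tx k n i, uu k n i j h α⁆ :=
  adp_succ k (tx k n i) (tt k n i j h) α

lemma adT_map_uu (i j : Fin n) (h : i ≠ j) (α β : ℕ) :
    ((adT k n (tx k n i)) ^ β) (uu k n i j h α) = uu k n i j h (β + α) := by
  rw [uu, uu, ← Module.End.mul_apply, ← pow_add]

lemma lxu_i (i j : Fin n) (h : i ≠ j) (α : ℕ) :
    ⁅tx k n i, uu k n i j h α⁆ = uu k n i j h (α + 1) := (uu_succ k n i j h α).symm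

lemma lxu_other (i j l : Fin n) (h : i ≠ j) (h1 : l ≠ i) (h2 : l ≠ j) (α : ℕ) :
    ⁅tx k n l, uu k n i j h α⁆ = 0 := by
  rw [uu, adT_eq, lie_adp k (rxx k n i l), rxt k n i j l h h1 h2, map_zero]

lemma lxu_j (i j : Fin n) (h : i ≠ j) (α : ℕ) :
    ⁅tx k n j, uu k n i j h α⁆ = -uu k n i j h (α + 1) := by
  rw [uu, adT_eq, lie_adp k (rxx k n i j),
    show ⁅tx k n j, tt k n i j h⁆ = -⁅tx k n i, tt k n i j h⁆ by rw [rxxt k n i j h, neg_neg],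
    map_neg, ← adp_succ']
  rfl

lemma uu_symm (i j : Fin n) (h : i ≠ j) (α : ℕ) :
    uu k n j i h.symm α = ((-1 : k) ^ α) • uu k n i j h α := by
  induction α with
  | zero => rw [uu_zero, uu_zero, pow_zero, one_smul, rsymm]
  | succ α ih =>
    rw [uu_succ, ih, lie_smul, lxu_j, smul_neg, pow_succ, mul_smul, neg_one_smul, smul_neg]

end T1Facts

end Statement12Aux

namespace Statement12Aux

section Core

set_option linter.unusedSectionVars false
set_option maxHeartbeats 1000000

variable (k : Type) [Field k] [CharZero k] (n : ℕ)

lemma sum_two {M : Type} [AddCommMonoid M] (f : Fin n → M) (i j : Fin n) (hij : i ≠ j)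
    (h : ∀ l, l ≠ i → l ≠ j → f l = 0) : ∑ l, f l = f i + f j := by
  rw [← Finset.sum_subset (Finset.subset_univ {i, j}) (fun x _ hx => by
      simp only [Finset.mem_insert, Finset.mem_singleton, not_or] at hx
      exact h x hx.1 hx.2),
    Finset.sum_pair hij]

lemma uu_lie_zero (i j : Fin n) (h : i ≠ j) {z : T1 k n}
    (h1 : ⁅tx k n i, z⁆ = 0) (h2 : ⁅tt k n i j h, z⁆ = 0) (α : ℕ) :
    ⁅uu k n i j h α, z⁆ = 0 :=
  adp_lie_zero k h1 h2 α

lemma tt_tt_disj (i j l m : Fin n) (hij : i ≠ j) (hlm : l ≠ m)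
    (hli : l ≠ i) (hlj : l ≠ j) (hmi : m ≠ i) (hmj : m ≠ j) :
    ⁅tt k n i j hij, tt k n l m hlm⁆ = 0 := by
  rw [← rxy k n l m hlm, leibniz_lie,
    show ⁅tt k n i j hij, tx k n l⁆ = 0 by
      rw [← lie_skew, rxt k n i j l hij hli hlj, neg_zero],
    show ⁅tt k n i j hij, ty k n m⁆ = 0 by
      rw [← lie_skew, ryt k n i j m hij hmi hmj, neg_zero],
    zero_lie, lie_zero, add_zero]

lemma tt_uu_disj (i j l m : Fin n) (hij : i ≠ j) (hlm : l ≠ m)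
    (hli : l ≠ i) (hlj : l ≠ j) (hmi : m ≠ i) (hmj : m ≠ j) (β : ℕ) :
    ⁅tt k n i j hij, uu k n l m hlm β⁆ = 0 := by
  rw [← lie_skew,
    uu_lie_zero k n l m hlm (rxt k n i j l hij hli hlj)
      (tt_tt_disj k n l m i j hlm hij hli.symm hmi.symm hlj.symm hmj.symm) β,
    neg_zero]

lemma uu_uu_disj (i j l m : Fin n) (hij : i ≠ j) (hlm : l ≠ m)
    (hli : l ≠ i) (hlj : l ≠ j) (hmi : m ≠ i) (hmj : m ≠ j) (α β : ℕ) :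
    ⁅uu k n i j hij α, uu k n l m hlm β⁆ = 0 :=
  uu_lie_zero k n i j hij (lxu_other k n l m i hlm hli.symm hmi.symm β)
    (tt_uu_disj k n i j l m hij hlm hli hlj hmi hmj β) α

/-- `u_{ij}^1 = [x_i, t_{ij}]`. -/
lemma uu_one (i j : Fin n) (h : i ≠ j) :
    uu k n i j h 1 = ⁅tx k n i, tt k n i j h⁆ := by
  rw [show (1 : ℕ) = 0 + 1 from rfl, uu_succ, uu_zero]

lemma tt_lie_x (i j : Fin n) (h : i ≠ j) :
    ⁅tt k n i j h, tx k n j⁆ = uu k n i j h 1 := by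
  rw [uu_one, rxxt k n i j h, ← lie_skew]

lemma x_lie_tt (i j : Fin n) (h : i ≠ j) :
    ⁅tx k n j, tt k n i j h⁆ = -uu k n i j h 1 := by
  rw [uu_one, rxxt k n i j h, neg_neg]

/-- The basic adjacency relation `[t_{ij}, t_{jl} + t_{il}] = 0`. -/
lemma q0 (i j l : Fin n) (hij : i ≠ j) (hjl : j ≠ l) (hil : i ≠ l) :
    ⁅tt k n i j hij, tt k n j l hjl⁆ = -⁅tt k n i j hij, tt k n i l hil⁆ := by
  have hdiag : ⁅tt k n i j hij, ⁅tx k n l, ty k n l⁆⁆ = 0 := by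
    rw [leibniz_lie,
      show ⁅tt k n i j hij, tx k n l⁆ = 0 by
        rw [← lie_skew, rxt k n i j l hij hil.symm hjl.symm, neg_zero],
      show ⁅tt k n i j hij, ty k n l⁆ = 0 by
        rw [← lie_skew, ryt k n i j l hij hil.symm hjl.symm, neg_zero],
      zero_lie, lie_zero, add_zero]
  rw [eq_neg_of_add_eq_zero_left (rdiag k n l), lie_neg, neg_eq_zero, lie_sum'] at hdiag
  rw [sum_two n _ i j hij (fun m hmi hmj => by
      by_cases hlm : l = m
      · rw [dif_neg (not_not_intro hlm)]
        exact lie_zero _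
      · rw [dif_pos hlm]
        exact tt_tt_disj k n i j l m hij hlm hil.symm hjl.symm hmi hmj)] at hdiag
  rw [dif_pos hil.symm, dif_pos hjl.symm, rsymm k n l i hil.symm,
    rsymm k n l j hjl.symm, add_comm] at hdiag
  exact eq_neg_of_add_eq_zero_left hdiag

/-- Key lemma `[t_{ij}, u_{jl}^β] = -[t_{ij}, u_{il}^β]`. -/
lemma Plem (i j l : Fin n) (hij : i ≠ j) (hjl : j ≠ l) (hil : i ≠ l) (β : ℕ) :
    ⁅tt k n i j hij, uu k n j l hjl β⁆ = -⁅tt k n i j hij, uu k n i l hil β⁆ := by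
  induction β with
  | zero => rw [uu_zero, uu_zero]; exact q0 k n i j l hij hjl hil
  | succ β ih =>
    have e2 : ⁅tx k n j, ⁅tt k n i j hij, uu k n i l hil β⁆⁆
        = -⁅uu k n i j hij 1, uu k n i l hil β⁆ := by
      rw [leibniz_lie, lxu_other k n i l j hil hij.symm hjl, lie_zero, add_zero,
        x_lie_tt k n i j hij, neg_lie]
    have e4 : ⁅tx k n i, ⁅tt k n i j hij, uu k n i l hil β⁆⁆
        = ⁅uu k n i j hij 1, uu k n i l hil β⁆ + ⁅tt k n i j hij, uu k n i l hil (β + 1)⁆ := by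
      rw [leibniz_lie, ← uu_one, ← uu_succ]
    have e3 : ⁅uu k n i j hij 1, uu k n j l hjl β⁆
        = -⁅tx k n i, ⁅tt k n i j hij, uu k n i l hil β⁆⁆ := by
      rw [uu_one, lie_lie, ih, lxu_other k n j l i hjl hij hil, lie_zero, sub_zero, lie_neg]
    rw [uu_succ, leibniz_lie, tt_lie_x k n i j hij, ih, lie_neg, e2, e3, e4]
    abel

end Core

end Statement12Aux

namespace Statement12Aux

section Core2

set_option linter.unusedSectionVars false
set_option maxHeartbeats 1000000

variable (k : Type) [Field k] [CharZero k] (n : ℕ)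

/-- The recursion relation `[u_{ij}^α, u_{jl}^β] = -Σ C(α,γ) [u_{ij}^γ, u_{il}^{α+β-γ}]`. -/
lemma Radj (i j l : Fin n) (hij : i ≠ j) (hjl : j ≠ l) (hil : i ≠ l) (α β : ℕ) :
    ⁅uu k n i j hij α, uu k n j l hjl β⁆
      = -∑ γ ∈ Finset.range (α + β + 1), (α.choose γ : k) •
          ⁅uu k n i j hij γ, uu k n i l hil (α + β - γ)⁆ := by
  induction α generalizing β with
  | zero =>
    have hs : ∑ γ ∈ Finset.range (0 + β + 1), ((Nat.choose 0 γ : k)) •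
        ⁅uu k n i j hij γ, uu k n i l hil (0 + β - γ)⁆
          = ⁅tt k n i j hij, uu k n i l hil β⁆ := by
      rw [Finset.sum_eq_single 0]
      · simp [uu_zero]
      · intro γ _ hγ
        cases γ with
        | zero => exact absurd rfl hγ
        | succ γ' => simp [Nat.choose_eq_zero_of_lt (Nat.succ_pos γ')]
      · intro h0; exact absurd (Finset.mem_range.mpr (Nat.succ_pos _)) h0
    rw [uu_zero, Plem k n i j l hij hjl hil β, hs]
  | succ α ih =>
    have hL : ⁅uu k n i j hij (α+1), uu k n j l hjl β⁆
        = ⁅tx k n i, ⁅uu k n i j hij α, uu k n j l hjl β⁆⁆ := by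
      rw [uu_succ, lie_lie, lxu_other k n j l i hjl hij hil β, lie_zero, sub_zero]
    set H : ℕ → T1 k n :=
      fun γ => ⁅uu k n i j hij γ, uu k n i l hil (α + β + 1 - γ)⁆ with hH
    have hterm : ∀ γ ∈ Finset.range (α + β + 1),
        (α.choose γ : k) • ⁅tx k n i, ⁅uu k n i j hij γ, uu k n i l hil (α + β - γ)⁆⁆
          = (α.choose γ : k) • H (γ+1) + (α.choose γ : k) • H γ := by
      intro γ hγ
      rw [Finset.mem_range] at hγ
      have e1 : α + β + 1 - (γ+1) = α + β - γ := by omega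
      have e2 : α + β - γ + 1 = α + β + 1 - γ := by omega
      rw [leibniz_lie, lxu_i k n i j hij γ, lxu_i k n i l hil (α + β - γ), smul_add, hH]
      dsimp only
      rw [e1, e2]
    have hR : ∑ γ ∈ Finset.range (α + 1 + β + 1), (((α+1).choose γ : k)) •
        ⁅uu k n i j hij γ, uu k n i l hil (α + 1 + β - γ)⁆
          = (∑ γ ∈ Finset.range (α + β + 1), ((α.choose γ : k)) • H (γ+1))
            + ∑ γ ∈ Finset.range (α + β + 1), ((α.choose γ : k)) • H γ := by
      have e0 : ∀ γ : ℕ, α + 1 + β - γ = α + β + 1 - γ := fun γ => by omega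
      rw [show α + 1 + β + 1 = α + β + 2 from by omega]
      rw [Finset.sum_congr rfl (fun γ _ => by rw [e0 γ])]
      rw [pascal_core k α (α + β) H,
        Finset.sum_range_succ (fun γ => ((α.choose γ : k)) • H γ) (α + β + 1),
        Nat.choose_eq_zero_of_lt (by omega), Nat.cast_zero, zero_smul, add_zero]
    rw [hL, ih β, lie_neg, lie_sum']
    simp only [lie_smul]
    rw [Finset.sum_congr rfl hterm, Finset.sum_add_distrib, ← hR]

/-- `[y_l, u_{ij}^α] = Σ C(α,γ) [u_{ij}^γ, u_{il}^{α-1-γ}]` for `l ∉ {i,j}`. -/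
lemma Lygt (i j l : Fin n) (hij : i ≠ j) (hil : i ≠ l) (hli : l ≠ i) (hlj : l ≠ j) (α : ℕ) :
    ⁅ty k n l, uu k n i j hij α⁆
      = ∑ γ ∈ Finset.range α, (α.choose γ : k) •
          ⁅uu k n i j hij γ, uu k n i l hil (α - 1 - γ)⁆ := by
  induction α with
  | zero => rw [uu_zero, ryt k n i j l hij hli hlj, Finset.range_zero, Finset.sum_empty]
  | succ α ih =>
    set H : ℕ → T1 k n := fun γ => ⁅uu k n i j hij γ, uu k n i l hil (α - γ)⁆ with hH
    have hstep : ⁅ty k n l, uu k n i j hij (α+1)⁆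
        = ⁅uu k n i j hij α, uu k n i l hil 0⁆ + ⁅tx k n i, ⁅ty k n l, uu k n i j hij α⁆⁆ := by
      rw [uu_succ, leibniz_lie,
        show ⁅ty k n l, tx k n i⁆ = -tt k n i l hil from by rw [← lie_skew, rxy k n i l hil],
        neg_lie, ← uu_zero k n i l hil, lie_skew]
    rw [hstep, ih, lie_sum']
    simp only [lie_smul]
    have hterm : ∀ γ ∈ Finset.range α,
        (α.choose γ : k) • ⁅tx k n i, ⁅uu k n i j hij γ, uu k n i l hil (α - 1 - γ)⁆⁆
          = (α.choose γ : k) • H (γ+1) + (α.choose γ : k) • H γ := by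
      intro γ hγ
      rw [Finset.mem_range] at hγ
      have e1 : α - (γ+1) = α - 1 - γ := by omega
      have e2 : α - 1 - γ + 1 = α - γ := by omega
      rw [leibniz_lie, lxu_i k n i j hij γ, lxu_i k n i l hil (α - 1 - γ), smul_add, hH]
      dsimp only
      rw [e1, e2]
    rw [Finset.sum_congr rfl hterm, Finset.sum_add_distrib]
    have hHα : H α = ⁅uu k n i j hij α, uu k n i l hil 0⁆ := by
      rw [hH]; dsimp only; rw [Nat.sub_self]
    have hgoal : ∑ γ ∈ Finset.range (α+1), (((α+1).choose γ : k)) •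
        ⁅uu k n i j hij γ, uu k n i l hil (α + 1 - 1 - γ)⁆
          = H α + (∑ γ ∈ Finset.range α, ((α.choose γ : k)) • H (γ+1))
            + ∑ γ ∈ Finset.range α, ((α.choose γ : k)) • H γ := by
      have e : ∀ γ : ℕ, α + 1 - 1 - γ = α - γ := fun γ => by omega
      rw [Finset.sum_congr rfl (fun γ _ => by rw [e γ])]
      exact pascal_sum2 k α H
    rw [hgoal, hHα]
    abel

/-- `[y_l, u_{ij}^α] = Σ (-1)^γ [u_{li}^γ, u_{lj}^{α-1-γ}]` for `l ∉ {i,j}`. -/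
lemma Lylt (i j l : Fin n) (hij : i ≠ j) (hli : l ≠ i) (hlj : l ≠ j) (α : ℕ) :
    ⁅ty k n l, uu k n i j hij α⁆
      = ∑ γ ∈ Finset.range α, ((-1 : k) ^ γ) •
          ⁅uu k n l i hli γ, uu k n l j hlj (α - 1 - γ)⁆ := by
  induction α with
  | zero => rw [uu_zero, ryt k n i j l hij hli hlj, Finset.range_zero, Finset.sum_empty]
  | succ α ih =>
    have hstep : ⁅ty k n l, uu k n i j hij (α+1)⁆
        = ⁅uu k n l i hli 0, uu k n l j hlj α⁆ + ⁅tx k n i, ⁅ty k n l, uu k n i j hij α⁆⁆ := by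
      rw [uu_succ, leibniz_lie,
        show ⁅ty k n l, tx k n i⁆ = -tt k n i l hli.symm from by
          rw [← lie_skew, rxy k n i l hli.symm],
        neg_lie, rsymm k n i l hli.symm, Plem k n l i j hli hij hlj α, neg_neg,
        ← uu_zero k n l i hli]
    rw [hstep, ih, lie_sum']
    simp only [lie_smul]
    have hterm : ∀ γ ∈ Finset.range α,
        ((-1 : k) ^ γ) • ⁅tx k n i, ⁅uu k n l i hli γ, uu k n l j hlj (α - 1 - γ)⁆⁆
          = -(((-1 : k) ^ γ) • ⁅uu k n l i hli (γ+1), uu k n l j hlj (α - 1 - γ)⁆) := by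
      intro γ _
      rw [leibniz_lie, lxu_other k n l j i hlj hli.symm hij (α - 1 - γ), lie_zero, add_zero,
        lxu_j k n l i hli γ, neg_lie, smul_neg]
    rw [Finset.sum_congr rfl hterm]
    rw [Finset.sum_range_succ' (fun γ => ((-1 : k) ^ γ) •
      ⁅uu k n l i hli γ, uu k n l j hlj (α + 1 - 1 - γ)⁆) α]
    have hre : ∀ γ ∈ Finset.range α, ((-1 : k) ^ (γ+1)) •
        ⁅uu k n l i hli (γ+1), uu k n l j hlj (α + 1 - 1 - (γ+1))⁆
          = -(((-1 : k) ^ γ) • ⁅uu k n l i hli (γ+1), uu k n l j hlj (α - 1 - γ)⁆) := by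
      intro γ _
      have e : α + 1 - 1 - (γ+1) = α - 1 - γ := by omega
      rw [e, pow_succ, mul_comm, mul_smul, neg_one_smul]
    rw [Finset.sum_congr rfl hre]
    have e0 : α + 1 - 1 - 0 = α := by omega
    rw [e0, pow_zero, one_smul]
    abel

/-- Reflected form of `Lygt`, matching the `YTmid` relation. -/
lemma Lymid (i j l : Fin n) (hij : i ≠ j) (hil : i ≠ l) (hli : l ≠ i) (hlj : l ≠ j) (α : ℕ) :
    ∑ γ ∈ Finset.range α, (α.choose (α - 1 - γ) : k) •
        ⁅uu k n i l hil γ, uu k n i j hij (α - 1 - γ)⁆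
      = -⁅ty k n l, uu k n i j hij α⁆ := by
  rw [Lygt k n i j l hij hil hli hlj α,
    ← Finset.sum_range_reflect (fun γ => (α.choose (α - 1 - γ) : k) •
      ⁅uu k n i l hil γ, uu k n i j hij (α - 1 - γ)⁆) α,
    ← Finset.sum_neg_distrib]
  refine Finset.sum_congr rfl fun γ hγ => ?_
  rw [Finset.mem_range] at hγ
  have e : α - 1 - (α - 1 - γ) = γ := by omega
  rw [e, ← lie_skew, smul_neg]

/-- `Σ_l [x_i, y_l] = 0`. -/
lemma sumxy (i : Fin n) : ∑ l, ⁅tx k n i, ty k n l⁆ = 0 := by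
  have key : ∀ l, ⁅tx k n i, ty k n l⁆
      = (if h : i ≠ l then tt k n i l h else 0)
        + (if l = i then ⁅tx k n i, ty k n i⁆ else 0) := by
    intro l
    by_cases hl : i = l
    · subst hl
      rw [dif_neg (not_not_intro rfl), if_pos rfl, zero_add]
    · rw [dif_pos hl, if_neg (Ne.symm hl), add_zero, rxy]
  rw [Finset.sum_congr rfl (fun l _ => key l), Finset.sum_add_distrib,
    Finset.sum_ite_eq' Finset.univ i (fun _ => ⁅tx k n i, ty k n i⁆),
    if_pos (Finset.mem_univ i), add_comm]
  exact rdiag k n i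

/-- `Σ_l [y_l, u_{ij}^α] = 0`. -/
lemma Lysum (i j : Fin n) (hij : i ≠ j) (α : ℕ) :
    ∑ l, ⁅ty k n l, uu k n i j hij α⁆ = 0 := by
  induction α with
  | zero =>
    rw [sum_two n _ i j hij (fun l hli hlj => by
      rw [uu_zero]; exact ryt k n i j l hij hli hlj)]
    rw [uu_zero, ryyt k n i j hij, neg_add_cancel]
  | succ α ih =>
    have key : ∀ l, ⁅ty k n l, uu k n i j hij (α+1)⁆
        = ⁅⁅ty k n l, tx k n i⁆, uu k n i j hij α⁆
          + ⁅tx k n i, ⁅ty k n l, uu k n i j hij α⁆⁆ := by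
      intro l
      rw [uu_succ, leibniz_lie]
    rw [Finset.sum_congr rfl (fun l _ => key l), Finset.sum_add_distrib,
      ← lie_sum', ih, lie_zero, add_zero, ← sum_lie']
    have : ∑ l, ⁅ty k n l, tx k n i⁆ = 0 := by
      have := sumxy k n i
      rw [← neg_eq_zero, ← Finset.sum_neg_distrib] at this
      rw [← this]
      exact Finset.sum_congr rfl fun l _ => (lie_skew _ _).symm
    rw [this, zero_lie]

end Core2

end Statement12Aux

namespace Statement12Aux

section Phi

set_option linter.unusedSectionVars false
set_option maxHeartbeats 2000000

variable (k : Type) [Field k] [CharZero k] (n : ℕ)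

/-- Images of the generators of `𝔊` in `𝔱_{1,n}`. -/
def gmap : GGen n → T1 k n
  | GGen.X i => tx k n i
  | GGen.Y i => ty k n i
  | GGen.T i j h α => -uu k n i j h.ne α

/-- The induced morphism on the free Lie algebra. -/
def phi : FG k n →ₗ⁅k⁆ T1 k n := FreeLieAlgebra.lift k (gmap k n)

@[simp] lemma phi_gX (i : Fin n) : phi k n (gX k n i) = tx k n i := by
  rw [phi, gX, FreeLieAlgebra.lift_of_apply]
  rfl

@[simp] lemma phi_gY (i : Fin n) : phi k n (gY k n i) = ty k n i := by
  rw [phi, gY, FreeLieAlgebra.lift_of_apply]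
  rfl

@[simp] lemma phi_gT (i j : Fin n) (h : i < j) (α : ℕ) :
    phi k n (gT k n i j h α) = -uu k n i j h.ne α := by
  rw [phi, gT, FreeLieAlgebra.lift_of_apply]
  rfl

lemma phi_rel {z : FG k n} (hz : GRel k n z) : phi k n z = 0 := by
  induction hz with
  | XX i j => rw [LieHom.map_lie, phi_gX, phi_gX]; exact rxx k n i j
  | YY i j => rw [LieHom.map_lie, phi_gY, phi_gY]; exact ryy k n i j
  | XYdiag i =>
    simp only [map_sub, LieHom.map_lie, phi_gX, phi_gY, lieHom_sum,
      apply_dite (phi k n), map_zero, phi_gT, uu_zero]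
    have hneg : ∀ (P : Prop) (inst : Decidable P) (f : P → T1 k n),
        (if h : P then -f h else 0) = -(if h : P then f h else 0) := by
      intro P inst f
      by_cases h : P
      · rw [dif_pos h, dif_pos h]
      · rw [dif_neg h, dif_neg h, neg_zero]
    rw [Finset.sum_congr rfl (fun m _ => hneg _ _ _),
      Finset.sum_congr rfl (fun m _ => hneg (m < i) _ _), Finset.sum_neg_distrib,
      Finset.sum_neg_distrib, sub_neg_eq_add, sub_neg_eq_add]
    have split : ∀ m : Fin n, (if h : i ≠ m then tt k n i m h else 0)
        = (if h : i < m then tt k n i m h.ne else 0)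
          + (if h : m < i then tt k n m i h.ne else 0) := by
      intro m
      rcases lt_trichotomy i m with h | h | h
      · rw [dif_pos h.ne, dif_pos h, dif_neg (lt_asymm h), add_zero]
      · subst h
        rw [dif_neg (not_not_intro rfl), dif_neg (lt_irrefl i), add_zero]
      · rw [dif_pos h.ne', dif_neg (lt_asymm h), dif_pos h, zero_add,
          rsymm k n i m h.ne']
    have hd := rdiag k n i
    rw [Finset.sum_congr rfl (fun m _ => split m), Finset.sum_add_distrib] at hd
    rw [add_assoc]
    exact hd
  | XYlt i j h =>
    rw [map_add, LieHom.map_lie, phi_gX, phi_gY, phi_gT, uu_zero,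
      rxy k n i j h.ne, add_neg_cancel]
  | XYgt i j h =>
    rw [map_add, LieHom.map_lie, phi_gX, phi_gY, phi_gT, uu_zero,
      rxy k n i j h.ne', rsymm k n i j h.ne', add_neg_cancel]
  | XT i j l h h1 h2 α =>
    rw [LieHom.map_lie, phi_gX, phi_gT, lie_neg, lxu_other k n i j l h.ne h1 h2 α, neg_zero]
  | XTi i j h α =>
    rw [map_sub, LieHom.map_lie, phi_gX, phi_gT, phi_gT, lie_neg,
      lxu_i k n i j h.ne α, sub_self]
  | XTj i j h α =>
    rw [map_add, LieHom.map_lie, phi_gX, phi_gT, phi_gT, lie_neg,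
      lxu_j k n i j h.ne α, neg_neg, add_neg_cancel]
  | TT i j l m hij hlm hil d1 d2 α β =>
    rw [LieHom.map_lie, phi_gT, phi_gT, neg_lie, lie_neg, neg_neg,
      uu_uu_disj k n i j l m hij.ne hlm.ne hil.ne' d1.symm (hil.trans hlm).ne' d2.symm α β]
  | TTadj i j l hij hjl α β =>
    simp only [map_add, LieHom.map_lie, lieHom_sum, map_smul, phi_gT,
      neg_lie, lie_neg, neg_neg]
    rw [Radj k n i j l hij.ne hjl.ne (hij.trans hjl).ne α β, neg_add_cancel]
  | TTadj' i j l hij hjl α β =>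
    simp only [map_add, LieHom.map_lie, lieHom_sum, map_smul, phi_gT,
      neg_lie, lie_neg, neg_neg]
    have hsymm : uu k n j l hjl.ne β = ((-1 : k) ^ β) • uu k n l j hjl.ne' β := by
      have h0 := uu_symm k n j l hjl.ne β
      rw [show uu k n l j hjl.ne' β = uu k n l j (hjl.ne).symm β from rfl, h0, smul_smul,
        ← mul_pow, neg_mul_neg, one_mul, one_pow, one_smul]
    set A := ∑ γ ∈ Finset.range (α + β + 1), ((α.choose (α + β - γ) : k)) •
      ⁅uu k n i j hij.ne γ, uu k n i l (hij.trans hjl).ne (α + β - γ)⁆ with hA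
    have hAeq : A = -∑ γ ∈ Finset.range (α + β + 1), ((α.choose γ : k)) •
        ⁅uu k n i l (hij.trans hjl).ne γ, uu k n i j hij.ne (α + β - γ)⁆ := by
      rw [← Finset.sum_neg_distrib,
        ← Finset.sum_range_reflect (fun γ => -(((α.choose γ : k)) •
          ⁅uu k n i l (hij.trans hjl).ne γ, uu k n i j hij.ne (α + β - γ)⁆)) (α + β + 1), hA]
      refine Finset.sum_congr rfl fun γ hγ => ?_
      rw [Finset.mem_range] at hγ
      have e2 : α + β + 1 - 1 - γ = α + β - γ := by omega
      have e : α + β - (α + β - γ) = γ := by omega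
      rw [e2, e, ← lie_skew, smul_neg]
    have hmain : ⁅uu k n i l (hij.trans hjl).ne α, uu k n j l hjl.ne β⁆ = ((-1 : k) ^ β) • A := by
      rw [hsymm, lie_smul, Radj k n i l j (hij.trans hjl).ne hjl.ne' hij.ne α β, hAeq]
    have hsum : ∑ γ ∈ Finset.range (α + β + 1), (((-1 : k) ^ (β + 1) * (α.choose (α + β - γ) : k))) •
        ⁅uu k n i j hij.ne γ, uu k n i l (hij.trans hjl).ne (α + β - γ)⁆
          = ((-1 : k) ^ (β + 1)) • A := by
      rw [hA, Finset.smul_sum]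
      exact Finset.sum_congr rfl fun γ _ => by rw [mul_smul]
    rw [hmain, hsum, pow_succ, mul_comm, mul_smul, neg_one_smul, add_neg_cancel]
  | YTlt i j l hij hli α =>
    simp only [map_add, LieHom.map_lie, lieHom_sum, map_smul, phi_gY, phi_gT,
      neg_lie, lie_neg, neg_neg]
    rw [Lylt k n i j l hij.ne hli.ne (hli.trans hij).ne α, neg_add_cancel]
  | YTmid i j l hil hlj α =>
    simp only [map_sub, LieHom.map_lie, lieHom_sum, map_smul, phi_gY, phi_gT,
      neg_lie, lie_neg, neg_neg]
    rw [Lymid k n i j l (hil.trans hlj).ne hil.ne hil.ne' hlj.ne α, sub_self]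
  | YTgt i j l hij hjl α =>
    simp only [map_add, LieHom.map_lie, lieHom_sum, map_smul, phi_gY, phi_gT,
      neg_lie, lie_neg, neg_neg]
    rw [Lygt k n i j l hij.ne (hij.trans hjl).ne (hij.trans hjl).ne' hjl.ne' α, neg_add_cancel]
  | YYT i j hij α =>
    simp only [map_add, map_sub, LieHom.map_lie, lieHom_sum, map_smul,
      apply_dite (phi k n), map_zero, phi_gY, phi_gT, neg_lie, lie_neg, neg_neg]
    have hS1 : ∀ x : Fin n, (if h : i < x ∧ x < j then
        ∑ γ ∈ Finset.range α, ((α.choose (α - 1 - γ) : k)) •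
          ⁅uu k n i x h.1.ne γ, uu k n i j hij.ne (α - 1 - γ)⁆ else 0)
        = (if _ : i < x ∧ x < j then -⁅ty k n x, uu k n i j hij.ne α⁆ else 0) := by
      intro x
      by_cases h : i < x ∧ x < j
      · rw [dif_pos h, dif_pos h]
        exact Lymid k n i j x hij.ne h.1.ne h.1.ne' h.2.ne α
      · rw [dif_neg h, dif_neg h]
    have hS2 : ∀ x : Fin n, (if h : j < x then
        ∑ γ ∈ Finset.range α, ((α.choose γ : k)) •
          ⁅uu k n i j hij.ne γ, uu k n i x (hij.trans h).ne (α - 1 - γ)⁆ else 0)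
        = (if _ : j < x then ⁅ty k n x, uu k n i j hij.ne α⁆ else 0) := by
      intro x
      by_cases h : j < x
      · rw [dif_pos h, dif_pos h]
        exact (Lygt k n i j x hij.ne (hij.trans h).ne (hij.trans h).ne' h.ne' α).symm
      · rw [dif_neg h, dif_neg h]
    have hS3 : ∀ x : Fin n, (if h : x < i then
        ∑ γ ∈ Finset.range α, ((-1 : k) ^ (γ + 1)) •
          ⁅uu k n x i h.ne γ, uu k n x j (h.trans hij).ne (α - 1 - γ)⁆ else 0)
        = (if _ : x < i then -⁅ty k n x, uu k n i j hij.ne α⁆ else 0) := by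
      intro x
      by_cases h : x < i
      · rw [dif_pos h, dif_pos h, Lylt k n i j x hij.ne h.ne (h.trans hij).ne α,
          ← Finset.sum_neg_distrib]
        refine Finset.sum_congr rfl fun γ _ => ?_
        rw [pow_succ, mul_comm, mul_smul, neg_one_smul]
      · rw [dif_neg h, dif_neg h]
    have hard : ∀ x : Fin n,
        (((if _ : i < x ∧ x < j then -⁅ty k n x, uu k n i j hij.ne α⁆ else 0)
          + -(if _ : j < x then ⁅ty k n x, uu k n i j hij.ne α⁆ else 0))
          + (if _ : x < i then -⁅ty k n x, uu k n i j hij.ne α⁆ else 0))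
        = -⁅ty k n x, uu k n i j hij.ne α⁆
          + ((if x = i then ⁅ty k n i, uu k n i j hij.ne α⁆ else 0)
            + (if x = j then ⁅ty k n j, uu k n i j hij.ne α⁆ else 0)) := by
      intro x
      rcases lt_trichotomy x i with h1 | h1 | h1
      · rw [dif_neg (fun hc => lt_asymm h1 hc.1), dif_neg (fun hc => lt_asymm (h1.trans hij) hc),
          dif_pos h1, if_neg h1.ne, if_neg (h1.trans hij).ne]
        simp
      · subst h1
        rw [dif_neg (fun hc => lt_irrefl x hc.1), dif_neg (fun hc => lt_asymm hij hc),
          dif_neg (lt_irrefl x), if_pos rfl, if_neg hij.ne]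
        simp only [neg_zero, zero_add, add_zero]
        rw [← neg_add_cancel ⁅ty k n x, uu k n x j hij.ne α⁆]
      · rcases lt_trichotomy x j with h2 | h2 | h2
        · rw [dif_pos ⟨h1, h2⟩, dif_neg (lt_asymm h2), dif_neg (lt_asymm h1),
            if_neg h1.ne', if_neg h2.ne]
          simp
        · subst h2
          rw [dif_neg (fun hc => lt_irrefl x hc.2), dif_neg (lt_irrefl x),
            dif_neg (lt_asymm h1), if_neg hij.ne', if_pos rfl]
          simp only [neg_zero, zero_add, add_zero]
          rw [← neg_add_cancel ⁅ty k n x, uu k n i x hij.ne α⁆]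
        · rw [dif_neg (fun hc => lt_asymm h2 hc.2), dif_pos h2, dif_neg (lt_asymm h1),
            if_neg h1.ne', if_neg h2.ne']
          simp
    have hRHS : ∑ x : Fin n, (-⁅ty k n x, uu k n i j hij.ne α⁆
        + ((if x = i then ⁅ty k n i, uu k n i j hij.ne α⁆ else 0)
          + (if x = j then ⁅ty k n j, uu k n i j hij.ne α⁆ else 0)))
        = ⁅ty k n i, uu k n i j hij.ne α⁆ + ⁅ty k n j, uu k n i j hij.ne α⁆ := by
      rw [Finset.sum_add_distrib, Finset.sum_add_distrib, Finset.sum_neg_distrib,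
        Lysum k n i j hij.ne α, neg_zero, zero_add,
        Finset.sum_ite_eq' Finset.univ i (fun _ => ⁅ty k n i, uu k n i j hij.ne α⁆),
        Finset.sum_ite_eq' Finset.univ j (fun _ => ⁅ty k n j, uu k n i j hij.ne α⁆),
        if_pos (Finset.mem_univ i), if_pos (Finset.mem_univ j)]
    have key : (∑ x : Fin n, (if _ : i < x ∧ x < j then -⁅ty k n x, uu k n i j hij.ne α⁆ else 0))
        - (∑ x : Fin n, (if _ : j < x then ⁅ty k n x, uu k n i j hij.ne α⁆ else 0))
        + (∑ x : Fin n, (if _ : x < i then -⁅ty k n x, uu k n i j hij.ne α⁆ else 0))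
        = ⁅ty k n i, uu k n i j hij.ne α⁆ + ⁅ty k n j, uu k n i j hij.ne α⁆ := by
      rw [sub_eq_add_neg, ← Finset.sum_neg_distrib, ← Finset.sum_add_distrib,
        ← Finset.sum_add_distrib, Finset.sum_congr rfl (fun x _ => hard x), hRHS]
    rw [Finset.sum_congr rfl (fun x _ => hS1 x), Finset.sum_congr rfl (fun x _ => hS2 x),
      Finset.sum_congr rfl (fun x _ => hS3 x), add_lie, ← key]
    abel

end Phi

end Statement12Aux

namespace Statement12Aux

section Assemble

set_option linter.unusedSectionVars false

variable (k : Type) [Field k] [CharZero k] (n : ℕ)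

/-- The quotient map `FG → 𝔊` as a morphism of Lie algebras. -/
def mkG : FG k n →ₗ⁅k⁆ GLie k n :=
  { (gIdeal k n).toSubmodule.mkQ with map_lie' := fun {_ _} => rfl }

lemma hker2 : (gIdeal k n).toSubmodule ≤ LinearMap.ker (phi k n).toLinearMap := by
  intro x hx
  have h1 : gIdeal k n ≤ (phi k n).ker :=
    (LieSubmodule.lieSpan_le).mpr (fun z hz => LieHom.mem_ker.mpr (phi_rel k n hz))
  have h2 : x ∈ (phi k n).ker := h1 hx
  rw [LieHom.mem_ker] at h2
  exact LinearMap.mem_ker.mpr h2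

/-- The underlying linear map of the induced morphism `𝔊 → 𝔱_{1,n}`. -/
def psi0 : GLie k n →ₗ[k] T1 k n :=
  Submodule.liftQ (gIdeal k n).toSubmodule (phi k n).toLinearMap (hker2 k n)

lemma psi0_mk (z : FG k n) :
    psi0 k n (LieSubmodule.Quotient.mk (N := gIdeal k n) z) = phi k n z := rfl

/-- The induced morphism `𝔊 → 𝔱_{1,n}`. -/
def psi : GLie k n →ₗ⁅k⁆ T1 k n :=
  { psi0 k n with
    map_lie' := by
      intro x y
      obtain ⟨a, rfl⟩ := LieSubmodule.Quotient.surjective_mk' (N := gIdeal k n) x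
      obtain ⟨b, rfl⟩ := LieSubmodule.Quotient.surjective_mk' (N := gIdeal k n) y
      show psi0 k n (LieSubmodule.Quotient.mk (N := gIdeal k n) ⁅a, b⁆)
        = ⁅psi0 k n (LieSubmodule.Quotient.mk (N := gIdeal k n) a),
           psi0 k n (LieSubmodule.Quotient.mk (N := gIdeal k n) b)⁆
      rw [psi0_mk, psi0_mk, psi0_mk, LieHom.map_lie] }

lemma psi_mk (z : FG k n) :
    psi k n (LieSubmodule.Quotient.mk (N := gIdeal k n) z) = phi k n z := rfl

lemma psi_X (i : Fin n) : psi k n (GXe k n i) = tx k n i := by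
  rw [GXe, psi_mk, phi_gX]

lemma psi_Y (i : Fin n) : psi k n (GYe k n i) = ty k n i := by
  rw [GYe, psi_mk, phi_gY]

lemma psi_T (i j : Fin n) (h : i < j) (α : ℕ) :
    psi k n (GTe k n i j h α) = -((adT k n (tx k n i)) ^ α) (tt k n i j h.ne) := by
  rw [GTe, psi_mk, phi_gT]
  rfl

lemma psi_unique (ψ' : GLie k n →ₗ⁅k⁆ T1 k n)
    (h1 : ∀ i : Fin n, ψ' (GXe k n i) = tx k n i)
    (h2 : ∀ i : Fin n, ψ' (GYe k n i) = ty k n i)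
    (h3 : ∀ (i j : Fin n) (h : i < j) (α : ℕ),
      ψ' (GTe k n i j h α) = -((adT k n (tx k n i)) ^ α) (tt k n i j h.ne)) :
    ψ' = psi k n := by
  have hcomp : ψ'.comp (mkG k n) = (psi k n).comp (mkG k n) := by
    apply FreeLieAlgebra.hom_ext
    intro g
    cases g with
    | X i =>
      show ψ' (GXe k n i) = psi k n (GXe k n i)
      rw [h1 i, psi_X]
    | Y i =>
      show ψ' (GYe k n i) = psi k n (GYe k n i)
      rw [h2 i, psi_Y]
    | T i j h α =>
      show ψ' (GTe k n i j h α) = psi k n (GTe k n i j h α)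
      rw [h3 i j h α, psi_T]
  apply LieHom.ext
  intro x
  obtain ⟨a, rfl⟩ := LieSubmodule.Quotient.surjective_mk' (N := gIdeal k n) x
  exact LieHom.congr_fun hcomp a

end Assemble

end Statement12Aux

/-- there is a unique Lie algebra morphism `𝔊 → 𝔱_{1,n}` with
`X_i ↦ x_i`, `Y_i ↦ y_i` and `T_{ij}^α ↦ −(ad x_i)^α(t_{ij})` for `i < j`, `α ≥ 0`. -/
theorem statement12 :
    ∃! ψ : GLie k n →ₗ⁅k⁆ T1 k n,
      (∀ i : Fin n, ψ (GXe k n i) = tx k n i) ∧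
      (∀ i : Fin n, ψ (GYe k n i) = ty k n i) ∧
      (∀ (i j : Fin n) (h : i < j) (α : ℕ),
        ψ (GTe k n i j h α) = -((adT k n (tx k n i)) ^ α) (tt k n i j h.ne)) := by
  refine ⟨Statement12Aux.psi k n,
    ⟨Statement12Aux.psi_X k n, Statement12Aux.psi_Y k n, Statement12Aux.psi_T k n⟩, ?_⟩
  intro ψ' hψ'
  exact Statement12Aux.psi_unique k n ψ' hψ'.1 hψ'.2.1 hψ'.2.2
end
end

section
/- In 𝔱_{1,n}, for any four pairwise distinct indices i, j, k, l in {1,…,n}, one has [t_{ij}, t_{kl}] = 0; more generally, for all α, β ≥ 0, [(ad x_i)^α(t_{ij}), (ad x_k)^β(t_{kl})] = 0. -/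
/-! The elliptic braid Lie algebra `𝔱_{1,n}` presented by generators and relations. -/

noncomputable section

variable (k : Type) [Field k] [CharZero k] (n : ℕ)

lemma rel_zero {a : FT k n} (h : TRel k n a) :
    (LieSubmodule.Quotient.mk (N := tIdeal k n) a : T1 k n) = 0 :=
  LieSubmodule.Quotient.mk_eq_zero'.mpr (LieSubmodule.subset_lieSpan (R := k) h)

lemma txx (i j : Fin n) : ⁅tx k n i, tx k n j⁆ = 0 := by
  rw [tx, tx, ← LieSubmodule.Quotient.mk_bracket]
  exact rel_zero k n (TRel.xx i j)

lemma txt (i j l : Fin n) (h : i ≠ j) (h1 : l ≠ i) (h2 : l ≠ j) :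
    ⁅tx k n l, tt k n i j h⁆ = 0 := by
  rw [tx, tt, ← LieSubmodule.Quotient.mk_bracket]
  exact rel_zero k n (TRel.xt i j l h h1 h2)

lemma tyt (i j l : Fin n) (h : i ≠ j) (h1 : l ≠ i) (h2 : l ≠ j) :
    ⁅ty k n l, tt k n i j h⁆ = 0 := by
  rw [ty, tt, ← LieSubmodule.Quotient.mk_bracket]
  exact rel_zero k n (TRel.yt i j l h h1 h2)

lemma tt_eq (i j : Fin n) (h : i ≠ j) : tt k n i j h = ⁅tx k n i, ty k n j⁆ := by
  have := rel_zero k n (TRel.xy i j h)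
  rw [LieSubmodule.Quotient.mk, Submodule.Quotient.mk_sub, sub_eq_zero] at this
  rw [tt, tx, ty, ← LieSubmodule.Quotient.mk_bracket]
  exact this.symm

lemma brk_tt (i j l m : Fin n)
    (hij : i ≠ j) (hlm : l ≠ m) (hil : i ≠ l) (him : i ≠ m) (hjl : j ≠ l)
    (hjm : j ≠ m) : ⁅tt k n i j hij, tt k n l m hlm⁆ = 0 := by
  rw [tt_eq k n i j hij, lie_lie, txt k n l m i hlm hil him,
    tyt k n l m j hlm hjl hjm, lie_zero, lie_zero, sub_zero]

lemma lemA (i j l : Fin n) (hij : i ≠ j) (h1 : l ≠ i) (h2 : l ≠ j) (α : ℕ) :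
    ⁅tx k n l, ((adT k n (tx k n i)) ^ α) (tt k n i j hij)⁆ = 0 := by
  induction α with
  | zero => simpa using txt k n i j l hij h1 h2
  | succ α ih =>
    simp only [adT] at ih ⊢
    rw [pow_succ', Module.End.mul_apply, LieAlgebra.ad_apply, leibniz_lie,
      txx, zero_lie, zero_add, ih, lie_zero]

lemma lemB (i j l m : Fin n)
    (hij : i ≠ j) (hlm : l ≠ m) (hil : i ≠ l) (him : i ≠ m) (hjl : j ≠ l)
    (hjm : j ≠ m) (α : ℕ) :
    ⁅tt k n l m hlm, ((adT k n (tx k n i)) ^ α) (tt k n i j hij)⁆ = 0 := by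
  induction α with
  | zero =>
    have := brk_tt k n i j l m hij hlm hil him hjl hjm
    simpa using (by rw [← lie_skew, this, neg_zero] :
      ⁅tt k n l m hlm, tt k n i j hij⁆ = 0)
  | succ α ih =>
    simp only [adT] at ih ⊢
    rw [pow_succ', Module.End.mul_apply, LieAlgebra.ad_apply, leibniz_lie, ih,
      lie_zero, add_zero, ← lie_skew (tt k n l m hlm), txt k n l m i hlm hil him,
      neg_zero, zero_lie]

theorem statement14' (i j l m : Fin n)
    (hij : i ≠ j) (hlm : l ≠ m) (hil : i ≠ l) (him : i ≠ m) (hjl : j ≠ l)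
    (hjm : j ≠ m) (α β : ℕ) :
      ⁅((adT k n (tx k n l)) ^ β) (tt k n l m hlm),
        ((adT k n (tx k n i)) ^ α) (tt k n i j hij)⁆ = 0 := by
  induction β with
  | zero => simpa using lemB k n i j l m hij hlm hil him hjl hjm α
  | succ β ih =>
    have hA := lemA k n i j l hij hil.symm hjl.symm α
    simp only [adT] at ih hA ⊢
    rw [pow_succ', Module.End.mul_apply, LieAlgebra.ad_apply, lie_lie, ih,
      lie_zero, zero_sub, hA, lie_zero, neg_zero]

/-- in `𝔱_{1,n}`, for pairwise distinct `i, j, l, m`, one has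
`[t_{ij}, t_{lm}] = 0`, and more generally
`[(ad x_i)^α(t_{ij}), (ad x_l)^β(t_{lm})] = 0` for all `α, β ≥ 0`. -/
theorem statement14 (i j l m : Fin n)
    (hij : i ≠ j) (hlm : l ≠ m) (hil : i ≠ l) (him : i ≠ m) (hjl : j ≠ l)
    (hjm : j ≠ m) :
    ⁅tt k n i j hij, tt k n l m hlm⁆ = 0 ∧
    ∀ α β : ℕ,
      ⁅((adT k n (tx k n i)) ^ α) (tt k n i j hij),
        ((adT k n (tx k n l)) ^ β) (tt k n l m hlm)⁆ = 0 := by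
  constructor
  · exact brk_tt k n i j l m hij hlm hil him hjl hjm
  · intro α β
    rw [← lie_skew, statement14' k n i j l m hij hlm hil him hjl hjm α β, neg_zero]
end
end

section
/- In 𝔱_{1,n}, for any three pairwise distinct indices i, j, k in {1,…,n} and any integers α, β ≥ 0, one has [(ad x_i)^α(t_{ij}), (ad x_j)^β(t_{jk})] = −Σ_{γ=0}^{α} C(α,γ)·[(ad x_i)^γ(t_{ij}), (ad x_i)^{α+β−γ}(t_{ik})], where C(α,γ) is the binomial coefficient. -/
/-! The elliptic braid Lie algebra `𝔱_{1,n}` presented by generators and relations. -/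

noncomputable section

variable (k : Type) [Field k] [CharZero k] (n : ℕ)

namespace Statement16Aux

set_option linter.unusedSectionVars false

lemma mk_rel {a : FT k n} (h : TRel k n a) :
    (LieSubmodule.Quotient.mk (N := tIdeal k n) a : T1 k n) = 0 := by
  rw [LieSubmodule.Quotient.mk_eq_zero']
  exact LieSubmodule.subset_lieSpan h

lemma mk_add' (a b : FT k n) :
    (LieSubmodule.Quotient.mk (N := tIdeal k n) (a + b) : T1 k n) =
      LieSubmodule.Quotient.mk a + LieSubmodule.Quotient.mk b := rfl

lemma mk_sub' (a b : FT k n) :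
    (LieSubmodule.Quotient.mk (N := tIdeal k n) (a - b) : T1 k n) =
      LieSubmodule.Quotient.mk a - LieSubmodule.Quotient.mk b := rfl

lemma t_xx (i j : Fin n) : ⁅tx k n i, tx k n j⁆ = 0 := by
  rw [tx, tx, ← LieSubmodule.Quotient.mk_bracket]
  exact mk_rel k n (TRel.xx i j)

lemma t_xt (i j m : Fin n) (h : i ≠ j) (h1 : m ≠ i) (h2 : m ≠ j) :
    ⁅tx k n m, tt k n i j h⁆ = 0 := by
  rw [tx, tt, ← LieSubmodule.Quotient.mk_bracket]
  exact mk_rel k n (TRel.xt i j m h h1 h2)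

lemma t_yt (i j m : Fin n) (h : i ≠ j) (h1 : m ≠ i) (h2 : m ≠ j) :
    ⁅ty k n m, tt k n i j h⁆ = 0 := by
  rw [ty, tt, ← LieSubmodule.Quotient.mk_bracket]
  exact mk_rel k n (TRel.yt i j m h h1 h2)

lemma t_xy (i j : Fin n) (h : i ≠ j) : ⁅tx k n i, ty k n j⁆ = tt k n i j h := by
  have h0 := mk_rel k n (TRel.xy i j h)
  rw [mk_sub' k n, sub_eq_zero] at h0
  rw [tx, ty, tt, ← LieSubmodule.Quotient.mk_bracket]
  exact h0

lemma t_xxt (i j : Fin n) (h : i ≠ j) :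
    ⁅tx k n j, tt k n i j h⁆ = -⁅tx k n i, tt k n i j h⁆ := by
  have h0 := mk_rel k n (TRel.xxt i j h)
  rw [add_lie, mk_add' k n, LieSubmodule.Quotient.mk_bracket,
    LieSubmodule.Quotient.mk_bracket] at h0
  rw [tx, tx, tt]
  exact eq_neg_of_add_eq_zero_right h0

lemma t_yyt (i j : Fin n) (h : i ≠ j) :
    ⁅ty k n j, tt k n i j h⁆ = -⁅ty k n i, tt k n i j h⁆ := by
  have h0 := mk_rel k n (TRel.yyt i j h)
  rw [add_lie, mk_add' k n, LieSubmodule.Quotient.mk_bracket,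
    LieSubmodule.Quotient.mk_bracket] at h0
  rw [ty, ty, tt]
  exact eq_neg_of_add_eq_zero_right h0

lemma adT_apply (v u : T1 k n) : adT k n v u = ⁅v, u⁆ := rfl

lemma adT_comm {a b : T1 k n} (h : ⁅a, b⁆ = 0) : Commute (adT k n a) (adT k n b) := by
  have h2 : ⁅adT k n a, adT k n b⁆ = 0 := by
    rw [Ring.lie_def, sub_eq_zero]; ext u
    change ⁅a, ⁅b, u⁆⁆ = ⁅b, ⁅a, u⁆⁆
    rw [leibniz_lie, h, zero_lie, zero_add]
  rwa [Ring.lie_def, sub_eq_zero] at h2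

/-- The case `α = β = 0`: `[t_{ij}, t_{jl}] = -[t_{ij}, t_{il}]`. -/
lemma ttt (i j l : Fin n) (hij : i ≠ j) (hil : i ≠ l) (hjl : j ≠ l) :
    ⁅tt k n i j hij, tt k n j l hjl⁆ = -⁅tt k n i j hij, tt k n i l hil⁆ := by
  have hy : ⁅tt k n i j hij, ty k n l⁆ = 0 := by
    rw [← lie_skew, t_yt k n i j l hij hil.symm hjl.symm, neg_zero]
  have hx : ⁅tt k n i j hij, tx k n j⁆ = ⁅tx k n i, tt k n i j hij⁆ := by
    rw [← lie_skew, t_xxt k n i j hij, neg_neg]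
  calc ⁅tt k n i j hij, tt k n j l hjl⁆
      = ⁅tt k n i j hij, ⁅tx k n j, ty k n l⁆⁆ := by rw [t_xy k n j l hjl]
    _ = ⁅⁅tt k n i j hij, tx k n j⁆, ty k n l⁆ + ⁅tx k n j, ⁅tt k n i j hij, ty k n l⁆⁆ :=
        leibniz_lie _ _ _
    _ = ⁅⁅tx k n i, tt k n i j hij⁆, ty k n l⁆ := by rw [hy, lie_zero, add_zero, hx]
    _ = ⁅tx k n i, ⁅tt k n i j hij, ty k n l⁆⁆ - ⁅tt k n i j hij, ⁅tx k n i, ty k n l⁆⁆ :=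
        lie_lie _ _ _
    _ = -⁅tt k n i j hij, tt k n i l hil⁆ := by
        rw [hy, lie_zero, zero_sub, t_xy k n i l hil]

/-- Binomial reindexing via Pascal's rule. -/
lemma binom_step {M : Type} [AddCommGroup M] [Module k M] (f : ℕ → ℕ → M) (α m : ℕ) :
    ∑ γ ∈ Finset.range (α + 1),
        (Nat.choose α γ : k) • (f (γ + 1) (m - γ) + f γ (m + 1 - γ)) =
    ∑ γ ∈ Finset.range (α + 1 + 1), (Nat.choose (α + 1) γ : k) • f γ (m + 1 - γ) := by
  rw [Finset.sum_range_succ' (fun γ => (Nat.choose (α + 1) γ : k) • f γ (m + 1 - γ)) (α + 1)]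
  simp only [smul_add, Finset.sum_add_distrib, Nat.succ_sub_succ, Nat.choose_succ_succ,
    Nat.cast_add, add_smul, Nat.choose_zero_right, Nat.cast_one, one_smul, Nat.sub_zero]
  rw [Finset.sum_range_succ' (fun γ => (Nat.choose α γ : k) • f γ (m + 1 - γ)) α,
    Finset.sum_range_succ (fun γ => (Nat.choose α (γ + 1) : k) • f (γ + 1) (m - γ)) α]
  simp only [Nat.succ_sub_succ, Nat.choose_succ_self, Nat.cast_zero, zero_smul,
    Nat.choose_zero_right, Nat.cast_one, one_smul, Nat.sub_zero, add_zero]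
  abel

lemma adA_pow (i : Fin n) (m : ℕ) (v : T1 k n) :
    adT k n (tx k n i) (((adT k n (tx k n i)) ^ m) v) =
      ((adT k n (tx k n i)) ^ (m + 1)) v := by
  rw [pow_succ']
  rfl

lemma adA_pow' (i : Fin n) (m : ℕ) (v : T1 k n) :
    ((adT k n (tx k n i)) ^ m) (adT k n (tx k n i) v) =
      ((adT k n (tx k n i)) ^ (m + 1)) v := by
  rw [pow_succ]
  rfl

lemma B_pow_A (i j : Fin n) (m : ℕ) (v : T1 k n) :
    adT k n (tx k n j) (((adT k n (tx k n i)) ^ m) v) =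
      ((adT k n (tx k n i)) ^ m) (adT k n (tx k n j) v) := by
  have h := ((adT_comm (k := k) (n := n) (t_xx k n i j)).symm.pow_right m)
  calc adT k n (tx k n j) (((adT k n (tx k n i)) ^ m) v)
      = (adT k n (tx k n j) * (adT k n (tx k n i)) ^ m) v := rfl
    _ = ((adT k n (tx k n i)) ^ m * adT k n (tx k n j)) v := by rw [h]
    _ = ((adT k n (tx k n i)) ^ m) (adT k n (tx k n j) v) := rfl

lemma B_Am_tij (i j : Fin n) (hij : i ≠ j) (m : ℕ) :
    adT k n (tx k n j) (((adT k n (tx k n i)) ^ m) (tt k n i j hij)) =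
      -(((adT k n (tx k n i)) ^ (m + 1)) (tt k n i j hij)) := by
  rw [B_pow_A, adT_apply, t_xxt k n i j hij, ← adT_apply (k := k) (n := n) (tx k n i)
    (tt k n i j hij), map_neg, adA_pow']

lemma B_Am_til (i j l : Fin n) (hij : i ≠ j) (hil : i ≠ l) (hjl : j ≠ l) (m : ℕ) :
    adT k n (tx k n j) (((adT k n (tx k n i)) ^ m) (tt k n i l hil)) = 0 := by
  rw [B_pow_A, adT_apply, t_xt k n i l j hil hij.symm hjl, map_zero]

/-- The case `β = 0`, by induction on `α`. -/
lemma base (i j l : Fin n) (hij : i ≠ j) (hil : i ≠ l) (hjl : j ≠ l) (α : ℕ) :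
    ⁅((adT k n (tx k n i)) ^ α) (tt k n i j hij), tt k n j l hjl⁆ =
    -∑ γ ∈ Finset.range (α + 1), (Nat.choose α γ : k) •
        ⁅((adT k n (tx k n i)) ^ γ) (tt k n i j hij),
          ((adT k n (tx k n i)) ^ (α - γ)) (tt k n i l hil)⁆ := by
  induction α with
  | zero =>
    simpa using ttt k n i j l hij hil hjl
  | succ α ih =>
    have step := congrArg (adT k n (tx k n i)) ih
    rw [adT_apply, leibniz_lie, t_xt k n j l i hjl hij hil, lie_zero, add_zero,
      ← adT_apply (k := k) (n := n) (tx k n i) (((adT k n (tx k n i)) ^ α) (tt k n i j hij)),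
      adA_pow] at step
    rw [step, map_neg, map_sum, neg_inj]
    rw [← binom_step k (fun a b => ⁅((adT k n (tx k n i)) ^ a) (tt k n i j hij),
          ((adT k n (tx k n i)) ^ b) (tt k n i l hil)⁆) α α]
    refine Finset.sum_congr rfl fun γ hγ => ?_
    rw [Finset.mem_range, Nat.lt_succ_iff] at hγ
    rw [map_smul, adT_apply, leibniz_lie,
      ← adT_apply (k := k) (n := n) (tx k n i) (((adT k n (tx k n i)) ^ γ) (tt k n i j hij)),
      ← adT_apply (k := k) (n := n) (tx k n i) (((adT k n (tx k n i)) ^ (α - γ)) (tt k n i l hil)),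
      adA_pow, adA_pow, Nat.sub_add_comm hγ]

/-- Statement 16, by induction on `β`. -/
lemma main (i j l : Fin n) (hij : i ≠ j) (hil : i ≠ l) (hjl : j ≠ l) (α β : ℕ) :
    ⁅((adT k n (tx k n i)) ^ α) (tt k n i j hij),
      ((adT k n (tx k n j)) ^ β) (tt k n j l hjl)⁆ =
    -∑ γ ∈ Finset.range (α + 1), (Nat.choose α γ : k) •
        ⁅((adT k n (tx k n i)) ^ γ) (tt k n i j hij),
          ((adT k n (tx k n i)) ^ (α + β - γ)) (tt k n i l hil)⁆ := by
  induction β generalizing α with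
  | zero =>
    simpa using base k n i j l hij hil hjl α
  | succ β ih =>
    have hw : ((adT k n (tx k n j)) ^ (β + 1)) (tt k n j l hjl) =
        adT k n (tx k n j) (((adT k n (tx k n j)) ^ β) (tt k n j l hjl)) := by
      rw [pow_succ']; rfl
    have hder := congrArg (adT k n (tx k n j)) (ih α)
    rw [adT_apply, leibniz_lie,
      ← adT_apply (k := k) (n := n) (tx k n j) (((adT k n (tx k n i)) ^ α) (tt k n i j hij)),
      ← adT_apply (k := k) (n := n) (tx k n j) (((adT k n (tx k n j)) ^ β) (tt k n j l hjl)),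
      B_Am_tij k n i j hij α, neg_lie, map_neg, map_sum] at hder
    have hterm : ∀ γ ∈ Finset.range (α + 1),
        adT k n (tx k n j) ((Nat.choose α γ : k) •
          ⁅((adT k n (tx k n i)) ^ γ) (tt k n i j hij),
            ((adT k n (tx k n i)) ^ (α + β - γ)) (tt k n i l hil)⁆) =
        -((Nat.choose α γ : k) •
          ⁅((adT k n (tx k n i)) ^ (γ + 1)) (tt k n i j hij),
            ((adT k n (tx k n i)) ^ (α + β - γ)) (tt k n i l hil)⁆) := by
      intro γ _
      rw [map_smul, adT_apply, leibniz_lie,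
        ← adT_apply (k := k) (n := n) (tx k n j) (((adT k n (tx k n i)) ^ γ) (tt k n i j hij)),
        ← adT_apply (k := k) (n := n) (tx k n j)
          (((adT k n (tx k n i)) ^ (α + β - γ)) (tt k n i l hil)),
        B_Am_tij k n i j hij γ, B_Am_til k n i j l hij hil hjl (α + β - γ),
        lie_zero, add_zero, neg_lie, smul_neg]
    rw [Finset.sum_congr rfl hterm, Finset.sum_neg_distrib, neg_neg] at hder
    rw [hw, eq_add_of_neg_add_eq hder, ih (α + 1)]
    have hb := binom_step k (fun a b => ⁅((adT k n (tx k n i)) ^ a) (tt k n i j hij),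
          ((adT k n (tx k n i)) ^ b) (tt k n i l hil)⁆) α (α + β)
    simp only [smul_add, Finset.sum_add_distrib] at hb
    simp only [show α + 1 + β = α + β + 1 from by omega,
      show ∀ γ : ℕ, α + (β + 1) - γ = α + β + 1 - γ from fun γ => by omega]
    rw [← hb]
    abel

end Statement16Aux


/-- in `𝔱_{1,n}`, for pairwise distinct `i, j, l` and `α, β ≥ 0`,
`[(ad x_i)^α(t_{ij}), (ad x_j)^β(t_{jl})]
  = −Σ_{γ=0}^{α} C(α,γ)·[(ad x_i)^γ(t_{ij}), (ad x_i)^{α+β−γ}(t_{il})]`. -/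
theorem statement16 (i j l : Fin n)
    (hij : i ≠ j) (hil : i ≠ l) (hjl : j ≠ l) (α β : ℕ) :
    ⁅((adT k n (tx k n i)) ^ α) (tt k n i j hij),
      ((adT k n (tx k n j)) ^ β) (tt k n j l hjl)⁆ =
    -∑ γ ∈ Finset.range (α + 1), (Nat.choose α γ : k) •
        ⁅((adT k n (tx k n i)) ^ γ) (tt k n i j hij),
          ((adT k n (tx k n i)) ^ (α + β - γ)) (tt k n i l hil)⁆ := by
  exact Statement16Aux.main k n i j l hij hil hjl α β
end
end

section
/- In 𝔱_{1,n}, for any three pairwise distinct indices i, j, k in {1,…,n} and any integer α ≥ 0, one has [y_k, (ad x_i)^α(t_{ij})] = −Σ_{γ,δ≥0, γ+δ=α−1} C(α,δ)·[(ad x_i)^γ(t_{ik}), (ad x_i)^δ(t_{ij})], where C(α,δ) is the binomial coefficient and the sum is empty when α = 0. -/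
/-! The elliptic braid Lie algebra `𝔱_{1,n}` presented by generators and relations. -/

noncomputable section

variable (k : Type) [Field k] [CharZero k] (n : ℕ)

namespace Statement17Aux

variable {k n}

/-- Relation: `[y_l, t_{ij}] = 0` in `𝔱_{1,n}` for `l ∉ {i,j}`. -/
lemma lie_ty_tt (l i j : Fin n) (h : i ≠ j) (h1 : l ≠ i) (h2 : l ≠ j) :
    ⁅ty k n l, tt k n i j h⁆ = 0 := by
  rw [ty, tt, ← LieSubmodule.Quotient.mk_bracket, LieSubmodule.Quotient.mk_eq_zero']
  exact LieSubmodule.subset_lieSpan (TRel.yt i j l h h1 h2)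

/-- Relation: `[x_i, y_l] = t_{il}` in `𝔱_{1,n}` for `i ≠ l`. -/
lemma lie_tx_ty (i l : Fin n) (h : i ≠ l) :
    ⁅tx k n i, ty k n l⁆ = tt k n i l h := by
  rw [tx, ty, tt, ← LieSubmodule.Quotient.mk_bracket]
  exact (Submodule.Quotient.eq _).mpr (LieSubmodule.subset_lieSpan (TRel.xy i l h))

/-- Pascal-type identity for binomially weighted sums in a module. -/
lemma sum_pascal {M : Type} [AddCommGroup M] [Module k M] (f : ℕ → ℕ → M) (α : ℕ) :
    ∑ δ ∈ Finset.range (α + 1), ((α + 1).choose δ : k) • f (α - δ) δ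
      = (f 0 α + ∑ δ ∈ Finset.range α, (α.choose δ : k) • f (α - δ) δ)
        + ∑ δ ∈ Finset.range α, (α.choose δ : k) • f (α - 1 - δ) (δ + 1) := by
  rw [Finset.sum_range_succ' (fun δ => ((α + 1).choose δ : k) • f (α - δ) δ) α]
  have h1 : ∀ δ ∈ Finset.range α,
      ((α + 1).choose (δ + 1) : k) • f (α - (δ + 1)) (δ + 1)
        = (α.choose (δ + 1) : k) • f (α - (δ + 1)) (δ + 1)
          + (α.choose δ : k) • f (α - 1 - δ) (δ + 1) := by
    intro δ _
    have hs : α - (δ + 1) = α - 1 - δ := by omega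
    rw [Nat.choose_succ_succ, Nat.cast_add, add_smul, hs, add_comm]
  rw [Finset.sum_congr rfl h1, Finset.sum_add_distrib]
  have h2 : f 0 α + ∑ δ ∈ Finset.range α, (α.choose δ : k) • f (α - δ) δ
      = (∑ δ ∈ Finset.range α, (α.choose (δ + 1) : k) • f (α - (δ + 1)) (δ + 1))
        + (α.choose 0 : k) • f (α - 0) 0 := by
    rw [← Finset.sum_range_succ' (fun δ => (α.choose δ : k) • f (α - δ) δ) α,
      Finset.sum_range_succ]
    simp [add_comm]
  rw [h2]
  simp only [Nat.choose_zero_right, Nat.cast_one, one_smul]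
  abel

end Statement17Aux

open Statement17Aux in

/-- in `𝔱_{1,n}`, for pairwise distinct `i, j, l` and `α ≥ 0`,
`[y_l, (ad x_i)^α(t_{ij})]
  = −Σ_{γ+δ=α−1, γ,δ≥0} C(α,δ)·[(ad x_i)^γ(t_{il}), (ad x_i)^δ(t_{ij})]`
(the sum, taken over `γ ∈ {0,…,α−1}` with `δ = α−1−γ`, is empty when `α = 0`). -/
theorem statement17 (i j l : Fin n)
    (hij : i ≠ j) (hil : i ≠ l) (hjl : j ≠ l) (α : ℕ) :
    ⁅ty k n l, ((adT k n (tx k n i)) ^ α) (tt k n i j hij)⁆ =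
    -∑ γ ∈ Finset.range α, (Nat.choose α (α - 1 - γ) : k) •
        ⁅((adT k n (tx k n i)) ^ γ) (tt k n i l hil),
          ((adT k n (tx k n i)) ^ (α - 1 - γ)) (tt k n i j hij)⁆ := by
    induction α with
  | zero =>
    simp only [pow_zero, Module.End.one_apply, Finset.range_zero, Finset.sum_empty, neg_zero]
    exact lie_ty_tt l i j hij hil.symm hjl.symm
  | succ m ih =>
    set X := adT k n (tx k n i) with hX
    set u0 := tt k n i l hil with hu0
    set t0 := tt k n i j hij with ht0
    set f : ℕ → ℕ → T1 k n := fun a b => ⁅(X ^ a) u0, (X ^ b) t0⁆ with hf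
    have hadX : ∀ (v : T1 k n), ⁅tx k n i, v⁆ = X v := fun v => rfl
    have hXpow : ∀ (v : T1 k n) (a : ℕ), ⁅tx k n i, (X ^ a) v⁆ = (X ^ (a + 1)) v := by
      intro v a
      rw [hadX, pow_succ', Module.End.mul_apply]
    have hv : (X ^ (m + 1)) t0 = ⁅tx k n i, (X ^ m) t0⁆ := (hXpow t0 m).symm
    rw [hv, leibniz_lie, ← neg_neg ⁅ty k n l, tx k n i⁆, lie_skew, lie_tx_ty i l hil, neg_lie, ih]
    -- compute the bracket of x_i with the sum, using the Leibniz rule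
    have hbr : ⁅tx k n i, -∑ γ ∈ Finset.range m, ((m.choose (m - 1 - γ) : k) •
          ⁅(X ^ γ) u0, (X ^ (m - 1 - γ)) t0⁆)⁆
        = -∑ γ ∈ Finset.range m, (m.choose (m - 1 - γ) : k) •
            (f (γ + 1) (m - 1 - γ) + f γ (m - 1 - γ + 1)) := by
      rw [lie_neg, neg_inj, hadX, map_sum]
      refine Finset.sum_congr rfl fun γ _ => ?_
      rw [map_smul, ← hadX]
      congr 1
      rw [leibniz_lie, hXpow, hXpow]
    rw [hbr, ← neg_add, neg_inj]
    -- reflect the sums to index them by the exponent on `t_{ij}`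
    have refl2 : ∑ γ ∈ Finset.range m, (m.choose (m - 1 - γ) : k) •
          (f (γ + 1) (m - 1 - γ) + f γ (m - 1 - γ + 1))
        = ∑ δ ∈ Finset.range m, (m.choose δ : k) • (f (m - δ) δ + f (m - 1 - δ) (δ + 1)) := by
      rw [← Finset.sum_range_reflect
        (fun δ => (m.choose δ : k) • (f (m - δ) δ + f (m - 1 - δ) (δ + 1))) m]
      refine Finset.sum_congr rfl fun γ hγ => ?_
      rw [Finset.mem_range] at hγ
      have e1 : m - 1 - (m - 1 - γ) = γ := by omega
      have e2 : m - (m - 1 - γ) = γ + 1 := by omega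
      rw [e1, e2]
    have refl1 : ∑ γ ∈ Finset.range (m + 1), ((m + 1).choose (m + 1 - 1 - γ) : k) •
          ⁅(X ^ γ) u0, (X ^ (m + 1 - 1 - γ)) t0⁆
        = ∑ δ ∈ Finset.range (m + 1), ((m + 1).choose δ : k) • f (m - δ) δ := by
      rw [← Finset.sum_range_reflect (fun δ => ((m + 1).choose δ : k) • f (m - δ) δ) (m + 1)]
      refine Finset.sum_congr rfl fun γ hγ => ?_
      rw [Finset.mem_range] at hγ
      have e1 : m + 1 - 1 - γ = m - γ := by omega
      have e2 : m - (m - γ) = γ := by omega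
      rw [e1, e2]
    rw [refl2, refl1, sum_pascal f m]
    have hf0 : ⁅u0, (X ^ m) t0⁆ = f 0 m := by
      rw [hf]
      simp only [pow_zero, Module.End.one_apply]
    rw [hf0]
    simp only [smul_add, Finset.sum_add_distrib]
    abel
end
end
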